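/- arXiv:1212.6830 — 5 statements merged into one kernel-verified Lean document; each statement's English description precedes it below -/
import Mathlib

section
/- Let n ≥ 2 be an integer, a ∈ (−1,1), and μ > n−1. Let F : ℝ → ℝ be smooth with F(−1) = F(1) = 0, F′(−1) = F′(1) = 0 and F ≥ 0 on [−1,1]. Then there exists a constant C > 0 (independent of T) such that for every T > 1, (μ²/2) ∫₀^{T^{1/8}} ∫_{−T}^{T} sech⁴(μt) · y^a cosh^{n−1}(t) dt dy + ∫_{−T}^{T} F(tanh(μt)) cosh^{n−1}(t) dt ≤ C T^{1/4}. -/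
open Real Filter MeasureTheory Set Topology

lemma my_cosh_le_exp_abs (x : ℝ) : Real.cosh x ≤ Real.exp |x| := by
  rw [Real.cosh_eq]
  have h1 : Real.exp x ≤ Real.exp |x| := Real.exp_le_exp.2 (le_abs_self x)
  have h2 : Real.exp (-x) ≤ Real.exp |x| := Real.exp_le_exp.2 (neg_le_abs x)
  linarith

lemma my_inv_cosh_le (x : ℝ) : 1 / Real.cosh x ≤ 2 * Real.exp (-|x|) := by
  have hc : Real.exp |x| / 2 ≤ Real.cosh x := by
    rw [← Real.cosh_abs, Real.cosh_eq]
    have := (Real.exp_pos (-|x|)).le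
    linarith
  have h0 : (0:ℝ) < Real.exp |x| / 2 := by positivity
  calc 1 / Real.cosh x ≤ 1 / (Real.exp |x| / 2) :=
        one_div_le_one_div_of_le h0 hc
    _ = 2 * Real.exp (-|x|) := by
        rw [Real.exp_neg]; field_simp

lemma my_exp_abs_integrable : Integrable (fun t : ℝ => Real.exp (-|t|)) := by
  have h1 : IntegrableOn (fun t : ℝ => Real.exp (-|t|)) (Ioi 0) := by
    have := exp_neg_integrableOn_Ioi 0 (one_pos (α := ℝ))
    refine this.congr_fun (fun x hx => ?_) measurableSet_Ioi
    simp [abs_of_pos (mem_Ioi.mp hx)]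
  have h2 : IntegrableOn (fun t : ℝ => Real.exp (-|t|)) (Iic 0) := by
    rw [← Measure.map_neg_eq_self (volume : Measure ℝ)]
    have m : MeasurableEmbedding fun x : ℝ => -x := (Homeomorph.neg ℝ).measurableEmbedding
    rw [m.integrableOn_map_iff]
    simp only [Function.comp_def, abs_neg, neg_preimage, neg_Iic, neg_zero]
    exact (integrableOn_Ici_iff_integrableOn_Ioi (hb := by simp)).mpr h1
  have := h2.union h1
  rw [Iic_union_Ioi] at this
  exact integrableOn_univ.mp this

lemma my_exp_abs_integral_le : (∫ t : ℝ, Real.exp (-|t|)) ≤ 2 := by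
  have : (∫ t : ℝ, Real.exp (-|t|)) = 2 * ∫ x in Ioi (0:ℝ), Real.exp (-x) :=
    integral_comp_abs (f := fun x => Real.exp (-x))
  rw [this, integral_exp_neg_Ioi_zero]; norm_num

lemma my_tanh_mem (x : ℝ) : Real.tanh x ∈ Set.Icc (-1:ℝ) 1 := by
  have hc := Real.cosh_pos x
  have h1 := Real.sinh_lt_cosh x
  have h2 := Real.sinh_lt_cosh (-x)
  rw [Real.sinh_neg, Real.cosh_neg] at h2
  rw [Real.tanh_eq_sinh_div_cosh]
  constructor
  · rw [le_div_iff₀ hc]; linarith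
  · rw [div_le_one hc]; linarith

lemma my_one_sub_tanh_sq (x : ℝ) : 1 - Real.tanh x ^ 2 = (1 / Real.cosh x) ^ 2 := by
  have hc := (Real.cosh_pos x).ne'
  rw [Real.tanh_eq_sinh_div_cosh]
  have h := Real.cosh_sq_sub_sinh_sq x
  field_simp
  exact h

lemma my_keybound (n : ℕ) (hn : 2 ≤ n) (μ : ℝ) (hμ : (n : ℝ) - 1 < μ) (t : ℝ) :
    (1 / Real.cosh (μ * t)) ^ 2 * Real.cosh t ^ (n - 1) ≤ 4 * Real.exp (-|t|) := by
  have hn1 : (1:ℝ) ≤ (n:ℝ) - 1 := by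
    have : (2:ℝ) ≤ (n:ℝ) := by exact_mod_cast hn
    linarith
  have hμpos : 0 < μ := by linarith
  have habs : |μ * t| = μ * |t| := by rw [abs_mul, abs_of_pos hμpos]
  have h1 : (1 / Real.cosh (μ * t)) ^ 2 ≤ (2 * Real.exp (-(μ * |t|))) ^ 2 := by
    apply pow_le_pow_left₀ (by positivity)
    rw [← habs]; exact my_inv_cosh_le (μ * t)
  have h2 : Real.cosh t ^ (n - 1) ≤ Real.exp (((n:ℝ) - 1) * |t|) := by
    calc Real.cosh t ^ (n - 1) ≤ Real.exp |t| ^ (n - 1) :=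
          pow_le_pow_left₀ (Real.cosh_pos t).le (my_cosh_le_exp_abs t) _
      _ = Real.exp (((n - 1 : ℕ) : ℝ) * |t|) := by rw [← Real.exp_nat_mul]
      _ = Real.exp (((n:ℝ) - 1) * |t|) := by
          congr 1
          push_cast [Nat.cast_sub (by omega : 1 ≤ n)]
          ring
  calc (1 / Real.cosh (μ * t)) ^ 2 * Real.cosh t ^ (n - 1)
      ≤ (2 * Real.exp (-(μ * |t|))) ^ 2 * Real.exp (((n:ℝ) - 1) * |t|) := by
        apply mul_le_mul h1 h2 (by positivity) (by positivity)
    _ = 4 * Real.exp ((-(2*μ) + ((n:ℝ) - 1)) * |t|) := by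
        rw [mul_pow, ← Real.exp_nat_mul, mul_assoc, ← Real.exp_add]
        norm_num
        ring_nf
    _ ≤ 4 * Real.exp (-|t|) := by
        have h4 : (-(2*μ) + ((n:ℝ) - 1)) * |t| ≤ -|t| := by
          have habs0 : 0 ≤ |t| := abs_nonneg t
          nlinarith
        have := Real.exp_le_exp.2 h4
        linarith

lemma my_F_bound (F : ℝ → ℝ) (hFs : ContDiff ℝ (⊤ : ℕ∞) F)
    (hFm1 : F (-1) = 0) (hF1 : F 1 = 0) :
    ∃ L : ℝ, 0 ≤ L ∧ ∀ s ∈ Set.Icc (-1:ℝ) 1, F s ≤ L * (1 - s ^ 2) := by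
  have hd : Continuous (deriv F) := (hFs.iterate_deriv 1).continuous
  obtain ⟨C, hC⟩ := (isCompact_Icc (a := (-1:ℝ)) (b := 1)).exists_bound_of_continuousOn
    hd.continuousOn
  refine ⟨max C 0, le_max_right _ _, fun s hs => ?_⟩
  set L := max C 0 with hLdef
  have hL0 : 0 ≤ L := le_max_right _ _
  have hbd : ∀ x ∈ Set.Icc (-1:ℝ) 1, ‖deriv F x‖ ≤ L :=
    fun x hx => (hC x hx).trans (le_max_left _ _)
  have hder : ∀ x ∈ Set.Icc (-1:ℝ) 1, DifferentiableAt ℝ F x :=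
    fun x _ => (hFs.differentiable (by simp)).differentiableAt
  have mvt : ∀ x ∈ Set.Icc (-1:ℝ) 1, ∀ y ∈ Set.Icc (-1:ℝ) 1, ‖F y - F x‖ ≤ L * ‖y - x‖ :=
    fun x hx y hy => Convex.norm_image_sub_le_of_norm_deriv_le hder hbd (convex_Icc _ _) hx hy
  obtain ⟨hs1, hs2⟩ := hs
  rcases le_total 0 s with h0 | h0
  · have h := mvt 1 (Set.right_mem_Icc.mpr (by norm_num)) s ⟨hs1, hs2⟩
    rw [hF1, sub_zero, Real.norm_eq_abs, Real.norm_eq_abs] at h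
    have h1 : F s ≤ L * (1 - s) := by
      have : |s - 1| = 1 - s := by rw [abs_sub_comm]; exact abs_of_nonneg (by linarith)
      calc F s ≤ |F s| := le_abs_self _
        _ ≤ L * |s - 1| := h
        _ = L * (1 - s) := by rw [this]
    nlinarith [mul_nonneg (mul_nonneg hL0 (by linarith : (0:ℝ) ≤ 1 - s)) h0]
  · have h := mvt (-1) (Set.left_mem_Icc.mpr (by norm_num)) s ⟨hs1, hs2⟩
    rw [hFm1, sub_zero, Real.norm_eq_abs, Real.norm_eq_abs] at h
    have h1 : F s ≤ L * (1 + s) := by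
      have : |s - -1| = 1 + s := by rw [abs_of_nonneg (by linarith)]; ring
      calc F s ≤ |F s| := le_abs_self _
        _ ≤ L * |s - -1| := h
        _ = L * (1 + s) := by rw [this]
    nlinarith [mul_nonneg (mul_nonneg hL0 (by linarith : (0:ℝ) ≤ 1 + s)) (by linarith : (0:ℝ) ≤ -s)]

lemma my_continuous_tanh : Continuous Real.tanh := by
  have h : Real.tanh = fun x => Real.sinh x / Real.cosh x :=
    funext fun x => Real.tanh_eq_sinh_div_cosh x
  rw [h]
  exact Real.continuous_sinh.div Real.continuous_cosh fun x => (Real.cosh_pos x).ne'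

/-- Upper bound, uniform in `T > 1`, for the reduced energy of the comparison function
`v(t,y) = tanh(μt)` on the box `Q_T^+ = (-T,T) × (0,T^{1/8})`:
`(μ²/2) ∫₀^{T^{1/8}} ∫_{-T}^{T} sech⁴(μt) y^a cosh^{n-1} t dt dy
  + ∫_{-T}^{T} F(tanh(μt)) cosh^{n-1} t dt ≤ C T^{1/4}`. -/
theorem stmt4 (n : ℕ) (hn : 2 ≤ n) (a : ℝ) (ha : a ∈ Set.Ioo (-1:ℝ) 1)
    (μ : ℝ) (hμ : (n : ℝ) - 1 < μ)
    (F : ℝ → ℝ) (hFs : ContDiff ℝ (⊤ : ℕ∞) F)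
    (hFm1 : F (-1) = 0) (hF1 : F 1 = 0)
    (hdm1 : deriv F (-1) = 0) (hd1 : deriv F 1 = 0)
    (hFpos : ∀ s ∈ Set.Icc (-1:ℝ) 1, 0 ≤ F s) :
    ∃ C : ℝ, 0 < C ∧ ∀ T : ℝ, 1 < T →
      μ ^ 2 / 2 * (∫ y in Set.Ioo (0:ℝ) (T ^ ((1:ℝ)/8)), ∫ t in Set.Ioo (-T) T,
          (1 / Real.cosh (μ * t)) ^ 4 * y ^ a * Real.cosh t ^ (n - 1)) +
        (∫ t in Set.Ioo (-T) T, F (Real.tanh (μ * t)) * Real.cosh t ^ (n - 1)) ≤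
      C * T ^ ((1:ℝ)/4) := by
  obtain ⟨hA, hA1⟩ := ha
  obtain ⟨L, hL0, hLF⟩ := my_F_bound F hFs hFm1 hF1
  have ha1 : (0:ℝ) < a + 1 := by linarith
  have hn1 : (1:ℝ) ≤ (n:ℝ) - 1 := by
    have : (2:ℝ) ≤ (n:ℝ) := by exact_mod_cast hn
    linarith
  have hμpos : 0 < μ := by linarith
  refine ⟨4 * μ ^ 2 / (a + 1) + 8 * L + 1, ?_, fun T hT => ?_⟩
  · have h1 : 0 ≤ 4 * μ ^ 2 / (a + 1) := div_nonneg (by positivity) ha1.le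
    linarith
  have hT0 : (0:ℝ) < T := by linarith
  have hT1 : (1:ℝ) ≤ T := hT.le
  set S := T ^ ((1:ℝ)/8) with hSdef
  have hS0 : (0:ℝ) ≤ S := Real.rpow_nonneg hT0.le _
  set u := T ^ ((1:ℝ)/4) with hudef
  have hu1 : (1:ℝ) ≤ u := by
    have := Real.rpow_le_rpow_of_exponent_le hT1 (by norm_num : (0:ℝ) ≤ 1/4)
    rwa [Real.rpow_zero] at this
  -- continuity and integrability
  have hcont1 : Continuous fun t : ℝ => (1 / Real.cosh (μ * t)) ^ 4 * Real.cosh t ^ (n - 1) := by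
    apply Continuous.mul
    · exact (continuous_const.div (Real.continuous_cosh.comp (continuous_const.mul continuous_id))
        (fun x => (Real.cosh_pos _).ne')).pow 4
    · exact Real.continuous_cosh.pow _
  have hcont2 : Continuous fun t : ℝ => F (Real.tanh (μ * t)) * Real.cosh t ^ (n - 1) := by
    apply Continuous.mul
    · exact hFs.continuous.comp (my_continuous_tanh.comp (continuous_const.mul continuous_id))
    · exact Real.continuous_cosh.pow _
  have hint1 : IntegrableOn (fun t : ℝ => (1 / Real.cosh (μ * t)) ^ 4 * Real.cosh t ^ (n - 1))
      (Ioo (-T) T) := (hcont1.integrableOn_Ioc).mono_set Ioo_subset_Ioc_self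
  have hint2 : IntegrableOn (fun t : ℝ => F (Real.tanh (μ * t)) * Real.cosh t ^ (n - 1))
      (Ioo (-T) T) := (hcont2.integrableOn_Ioc).mono_set Ioo_subset_Ioc_self
  have hexpint : ∫ t in Ioo (-T) T, Real.exp (-|t|) ≤ 2 :=
    le_trans (setIntegral_le_integral my_exp_abs_integrable
      (Filter.Eventually.of_forall fun t => (Real.exp_pos _).le)) my_exp_abs_integral_le
  -- the t-integral I
  set I := ∫ t in Ioo (-T) T, (1 / Real.cosh (μ * t)) ^ 4 * Real.cosh t ^ (n - 1) with hIdef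
  have hI0 : 0 ≤ I := setIntegral_nonneg measurableSet_Ioo fun t _ => by positivity
  have hI8 : I ≤ 8 := by
    have hpt : ∀ t ∈ Ioo (-T) T,
        (1 / Real.cosh (μ * t)) ^ 4 * Real.cosh t ^ (n - 1) ≤ 4 * Real.exp (-|t|) := by
      intro t _
      have h42 : (1 / Real.cosh (μ * t)) ^ 4 ≤ (1 / Real.cosh (μ * t)) ^ 2 := by
        apply pow_le_pow_of_le_one (by positivity) _ (by norm_num)
        rw [div_le_one (Real.cosh_pos _)]
        exact Real.one_le_cosh _
      calc (1 / Real.cosh (μ * t)) ^ 4 * Real.cosh t ^ (n - 1)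
          ≤ (1 / Real.cosh (μ * t)) ^ 2 * Real.cosh t ^ (n - 1) :=
            mul_le_mul_of_nonneg_right h42 (by positivity)
        _ ≤ 4 * Real.exp (-|t|) := my_keybound n hn μ hμ t
    calc I ≤ ∫ t in Ioo (-T) T, 4 * Real.exp (-|t|) :=
          setIntegral_mono_on hint1 ((my_exp_abs_integrable.const_mul 4).integrableOn)
            measurableSet_Ioo hpt
      _ = 4 * ∫ t in Ioo (-T) T, Real.exp (-|t|) := integral_const_mul _ _
      _ ≤ 4 * 2 := by linarith
      _ = 8 := by norm_num
  -- second integral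
  have hJ : (∫ t in Ioo (-T) T, F (Real.tanh (μ * t)) * Real.cosh t ^ (n - 1)) ≤ 8 * L := by
    have hpt : ∀ t ∈ Ioo (-T) T,
        F (Real.tanh (μ * t)) * Real.cosh t ^ (n - 1) ≤ L * 4 * Real.exp (-|t|) := by
      intro t _
      have hF : F (Real.tanh (μ * t)) ≤ L * (1 / Real.cosh (μ * t)) ^ 2 := by
        have := hLF _ (my_tanh_mem (μ * t))
        rwa [my_one_sub_tanh_sq] at this
      calc F (Real.tanh (μ * t)) * Real.cosh t ^ (n - 1)
          ≤ L * (1 / Real.cosh (μ * t)) ^ 2 * Real.cosh t ^ (n - 1) :=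
            mul_le_mul_of_nonneg_right hF (by positivity)
        _ = L * ((1 / Real.cosh (μ * t)) ^ 2 * Real.cosh t ^ (n - 1)) := by ring
        _ ≤ L * (4 * Real.exp (-|t|)) :=
            mul_le_mul_of_nonneg_left (my_keybound n hn μ hμ t) hL0
        _ = L * 4 * Real.exp (-|t|) := by ring
    calc (∫ t in Ioo (-T) T, F (Real.tanh (μ * t)) * Real.cosh t ^ (n - 1))
        ≤ ∫ t in Ioo (-T) T, L * 4 * Real.exp (-|t|) :=
          setIntegral_mono_on hint2 ((my_exp_abs_integrable.const_mul (L * 4)).integrableOn)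
            measurableSet_Ioo hpt
      _ = L * 4 * ∫ t in Ioo (-T) T, Real.exp (-|t|) := integral_const_mul _ _
      _ ≤ L * 4 * 2 := mul_le_mul_of_nonneg_left hexpint (by positivity)
      _ = 8 * L := by ring
  -- the y-integral
  have hE : (∫ y in Ioo (0:ℝ) S, y ^ a) = S ^ (a + 1) / (a + 1) := by
    rw [← integral_Ioc_eq_integral_Ioo, ← intervalIntegral.integral_of_le hS0,
      integral_rpow (Or.inl hA), Real.zero_rpow ha1.ne']
    ring
  have hE' : (∫ y in Ioo (0:ℝ) S, y ^ a) ≤ u / (a + 1) := by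
    rw [hE]
    gcongr
    calc S ^ (a + 1) = T ^ ((1:ℝ)/8 * (a + 1)) := (Real.rpow_mul hT0.le _ _).symm ▸ rfl
      _ ≤ u := Real.rpow_le_rpow_of_exponent_le hT1 (by linarith)
  have hE0 : 0 ≤ ∫ y in Ioo (0:ℝ) S, y ^ a :=
    setIntegral_nonneg measurableSet_Ioo fun y hy => Real.rpow_nonneg hy.1.le _
  have hrw : ∀ y : ℝ, (∫ t in Ioo (-T) T,
      (1 / Real.cosh (μ * t)) ^ 4 * y ^ a * Real.cosh t ^ (n - 1)) = y ^ a * I := by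
    intro y
    rw [hIdef, ← integral_const_mul]
    congr 1
    funext t
    ring
  have hD : (∫ y in Ioo (0:ℝ) S, ∫ t in Ioo (-T) T,
      (1 / Real.cosh (μ * t)) ^ 4 * y ^ a * Real.cosh t ^ (n - 1))
      = (∫ y in Ioo (0:ℝ) S, y ^ a) * I := by
    simp_rw [hrw]
    exact integral_mul_const _ _
  rw [hD]
  have hprod : (∫ y in Ioo (0:ℝ) S, y ^ a) * I ≤ u / (a + 1) * 8 :=
    mul_le_mul hE' hI8 hI0 (by positivity)
  have h1 : μ ^ 2 / 2 * ((∫ y in Ioo (0:ℝ) S, y ^ a) * I) ≤ μ ^ 2 / 2 * (u / (a + 1) * 8) :=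
    mul_le_mul_of_nonneg_left hprod (by positivity)
  have h2 : μ ^ 2 / 2 * (u / (a + 1) * 8) = 4 * μ ^ 2 / (a + 1) * u := by ring
  have h3 : 8 * L ≤ (8 * L + 1) * u := by nlinarith
  have h4 : (4 * μ ^ 2 / (a + 1) + 8 * L + 1) * u = 4 * μ ^ 2 / (a + 1) * u + (8 * L + 1) * u := by
    ring
  linarith
end

section
/- Let u : ℝ × (0,∞) → ℝ be three times continuously differentiable with H_a u = 0 on ℝ × (0,∞), extending continuously together with ∂_t u to ℝ × [0,∞), with t ↦ u(t,0) differentiable, and such that for every t ∈ ℝ: lim_{y→0⁺} y^a ∂_y u(t,y) = −(1/d_γ) f(u(t,0)), lim_{y→∞} y^a ∂_y u(t,y) ∂_t u(t,y) = 0, and lim_{y→0⁺} y^a ∂_y u(t,y) ∂_t u(t,y) = −(1/d_γ) f(u(t,0)) ∂_t u(t,0). Assume that for every compact interval I ⊂ ℝ there is an integrable function g : (0,∞) → ℝ such that y^a(|∂_t u|² + |∂_y u|² + |∂_t u||∂_{tt}u| + |∂_y u||∂_{ty}u|)(t,y) ≤ g(y) for all t ∈ I and y > 0. Define V(t) = (1/2)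 ∫₀^∞ y^a ((∂_t u(t,y))² − (∂_y u(t,y))²) dy − (1/d_γ)(F(u(t,0)) − F(1)). Then V is differentiable on ℝ and V′(t) = −(n−1) tanh(t) ∫₀^∞ y^a (∂_t u(t,y))² dy for every t ∈ ℝ. -/
open Real Filter MeasureTheory Set Topology

noncomputable def pt (u : ℝ → ℝ → ℝ) (t y : ℝ) : ℝ := deriv (fun s => u s y) t
noncomputable def py (u : ℝ → ℝ → ℝ) (t y : ℝ) : ℝ := deriv (fun z => u t z) y
noncomputable def ptt (u : ℝ → ℝ → ℝ) (t y : ℝ) : ℝ := deriv (fun s => pt u s y) t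
noncomputable def pyy (u : ℝ → ℝ → ℝ) (t y : ℝ) : ℝ := deriv (fun z => py u t z) y
noncomputable def pty (u : ℝ → ℝ → ℝ) (t y : ℝ) : ℝ := deriv (fun z => pt u t z) y

/-- The degenerate elliptic operator `H_a u = u_yy + (a/y) u_y + u_tt + (n-1) tanh t · u_t`. -/
noncomputable def Ha (n : ℕ) (a : ℝ) (u : ℝ → ℝ → ℝ) (t y : ℝ) : ℝ :=
  pyy u t y + (a / y) * py u t y + ptt u t y + ((n : ℝ) - 1) * Real.tanh t * pt u t y

/-- The normalizing constant `d_γ = 2^{2γ-1} Γ(γ)/Γ(1-γ)` of the extension problem. -/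
noncomputable def dgamma (γ : ℝ) : ℝ :=
  2 ^ (2 * γ - 1) * Real.Gamma γ / Real.Gamma (1 - γ)

/-- The Hamiltonian quantity
`V(t) = (1/2)∫₀^∞ y^a ((∂_t u)² - (∂_y u)²) dy - (1/d_γ)(F(u(t,0)) - F(1))`. -/
noncomputable def Vham (a dγ : ℝ) (F : ℝ → ℝ) (u : ℝ → ℝ → ℝ) (t : ℝ) : ℝ :=
  (1/2) * (∫ y in Set.Ioi (0:ℝ), y ^ a * ((pt u t y) ^ 2 - (py u t y) ^ 2)) -
    (1/dγ) * (F (u t 0) - F 1)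

namespace Stmt7Aux

lemma isOpenS : IsOpen {p : ℝ × ℝ | 0 < p.2} := isOpen_lt continuous_const continuous_snd

noncomputable def PTf (u : ℝ → ℝ → ℝ) : ℝ × ℝ → ℝ :=
  fun p => fderiv ℝ (fun q : ℝ × ℝ => u q.1 q.2) p ((1:ℝ), (0:ℝ))

noncomputable def PYf (u : ℝ → ℝ → ℝ) : ℝ × ℝ → ℝ :=
  fun p => fderiv ℝ (fun q : ℝ × ℝ => u q.1 q.2) p ((0:ℝ), (1:ℝ))

variable {u : ℝ → ℝ → ℝ}

lemma lineT {f : ℝ × ℝ → ℝ} {t y : ℝ} (hf : DifferentiableAt ℝ f (t, y)) :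
    HasDerivAt (fun s => f (s, y)) (fderiv ℝ f (t, y) ((1:ℝ), (0:ℝ))) t := by
  have h1 : HasDerivAt (fun s : ℝ => (s, y)) (((1:ℝ), (0:ℝ)) : ℝ × ℝ) t :=
    (hasDerivAt_id t).prodMk (hasDerivAt_const t y)
  exact hf.hasFDerivAt.comp_hasDerivAt t h1

lemma lineY {f : ℝ × ℝ → ℝ} {t y : ℝ} (hf : DifferentiableAt ℝ f (t, y)) :
    HasDerivAt (fun z => f (t, z)) (fderiv ℝ f (t, y) ((0:ℝ), (1:ℝ))) y := by
  have h1 : HasDerivAt (fun z : ℝ => (t, z)) (((0:ℝ), (1:ℝ)) : ℝ × ℝ) y :=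
    (hasDerivAt_const y t).prodMk (hasDerivAt_id y)
  exact hf.hasFDerivAt.comp_hasDerivAt y h1

variable (hsm : ContDiffOn ℝ 3 (fun p : ℝ × ℝ => u p.1 p.2) {p : ℝ × ℝ | 0 < p.2})

include hsm

lemma hUdiff {p : ℝ × ℝ} (hp : 0 < p.2) :
    DifferentiableAt ℝ (fun q : ℝ × ℝ => u q.1 q.2) p :=
  (hsm.contDiffAt (isOpenS.mem_nhds hp)).differentiableAt (by norm_num)

lemma pt_eq {t y : ℝ} (hy : 0 < y) : pt u t y = PTf u (t, y) :=
  (lineT (hUdiff hsm hy)).deriv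

lemma py_eq {t y : ℝ} (hy : 0 < y) : py u t y = PYf u (t, y) :=
  (lineY (hUdiff hsm hy)).deriv

lemma hW2 : ContDiffOn ℝ 2 (fderiv ℝ (fun q : ℝ × ℝ => u q.1 q.2)) {p : ℝ × ℝ | 0 < p.2} :=
  hsm.fderiv_of_isOpen isOpenS (by norm_num)

lemma hPT2 : ContDiffOn ℝ 2 (PTf u) {p : ℝ × ℝ | 0 < p.2} :=
  (hW2 hsm).clm_apply contDiffOn_const

lemma hPY2 : ContDiffOn ℝ 2 (PYf u) {p : ℝ × ℝ | 0 < p.2} :=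
  (hW2 hsm).clm_apply contDiffOn_const

lemma hPTdiff {p : ℝ × ℝ} (hp : 0 < p.2) : DifferentiableAt ℝ (PTf u) p :=
  ((hPT2 hsm).contDiffAt (isOpenS.mem_nhds hp)).differentiableAt (by norm_num)

lemma hPYdiff {p : ℝ × ℝ} (hp : 0 < p.2) : DifferentiableAt ℝ (PYf u) p :=
  ((hPY2 hsm).contDiffAt (isOpenS.mem_nhds hp)).differentiableAt (by norm_num)

lemma hasDerivAt_pt_t {t y : ℝ} (hy : 0 < y) :
    HasDerivAt (fun s => pt u s y) (ptt u t y) t := by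
  have he : (fun s => pt u s y) = fun s => PTf u (s, y) := funext fun s => pt_eq hsm hy
  have h := lineT (hPTdiff hsm (p := (t, y)) hy)
  rw [← he] at h
  have : ptt u t y = fderiv ℝ (PTf u) (t, y) ((1:ℝ), (0:ℝ)) := h.deriv
  rw [this]; exact h

lemma hasDerivAt_pt_y {t y : ℝ} (hy : 0 < y) :
    HasDerivAt (fun z => pt u t z) (pty u t y) y := by
  have he : (fun z => pt u t z) =ᶠ[𝓝 y] fun z => PTf u (t, z) := by
    filter_upwards [Ioi_mem_nhds hy] with z hz
    exact pt_eq hsm hz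
  have h := (lineY (hPTdiff hsm (p := (t, y)) hy)).congr_of_eventuallyEq he
  have : pty u t y = fderiv ℝ (PTf u) (t, y) ((0:ℝ), (1:ℝ)) := h.deriv
  rw [this]; exact h

lemma hasDerivAt_py_y {t y : ℝ} (hy : 0 < y) :
    HasDerivAt (fun z => py u t z) (pyy u t y) y := by
  have he : (fun z => py u t z) =ᶠ[𝓝 y] fun z => PYf u (t, z) := by
    filter_upwards [Ioi_mem_nhds hy] with z hz
    exact py_eq hsm hz
  have h := (lineY (hPYdiff hsm (p := (t, y)) hy)).congr_of_eventuallyEq he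
  have : pyy u t y = fderiv ℝ (PYf u) (t, y) ((0:ℝ), (1:ℝ)) := h.deriv
  rw [this]; exact h

lemma fderiv_symm {p : ℝ × ℝ} (hp : 0 < p.2) :
    fderiv ℝ (PYf u) p ((1:ℝ), (0:ℝ)) = fderiv ℝ (PTf u) p ((0:ℝ), (1:ℝ)) := by
  set U : ℝ × ℝ → ℝ := fun q : ℝ × ℝ => u q.1 q.2 with hU
  set W : ℝ × ℝ → (ℝ × ℝ →L[ℝ] ℝ) := fderiv ℝ U with hWdef
  have hWd : DifferentiableAt ℝ W p :=
    ((hW2 hsm).contDiffAt (isOpenS.mem_nhds hp)).differentiableAt (by norm_num)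
  have hev : ∀ᶠ q in 𝓝 p, HasFDerivAt U (W q) q := by
    filter_upwards [isOpenS.mem_nhds hp] with q hq
    exact (hUdiff hsm hq).hasFDerivAt
  have hsymm := second_derivative_symmetric_of_eventually hev hWd.hasFDerivAt
  have hPT : ∀ v : ℝ × ℝ,
      fderiv ℝ (PTf u) p v = (fderiv ℝ W p v) ((1:ℝ), (0:ℝ)) := by
    intro v
    have h := hWd.hasFDerivAt.clm_apply (hasFDerivAt_const (((1:ℝ), (0:ℝ)) : ℝ × ℝ) p)
    have h2 : fderiv ℝ (PTf u) p = (W p).comp 0 + (fderiv ℝ W p).flip ((1:ℝ), (0:ℝ)) :=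
      h.fderiv
    rw [h2]; simp
  have hPY : ∀ v : ℝ × ℝ,
      fderiv ℝ (PYf u) p v = (fderiv ℝ W p v) ((0:ℝ), (1:ℝ)) := by
    intro v
    have h := hWd.hasFDerivAt.clm_apply (hasFDerivAt_const (((0:ℝ), (1:ℝ)) : ℝ × ℝ) p)
    have h2 : fderiv ℝ (PYf u) p = (W p).comp 0 + (fderiv ℝ W p).flip ((0:ℝ), (1:ℝ)) :=
      h.fderiv
    rw [h2]; simp
  rw [hPY, hPT, hsymm]

lemma pty_eq' {t y : ℝ} (hy : 0 < y) :
    pty u t y = fderiv ℝ (PTf u) (t, y) ((0:ℝ), (1:ℝ)) :=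
  (hasDerivAt_pt_y hsm hy).unique (by
    apply (lineY (hPTdiff hsm (p := (t, y)) hy)).congr_of_eventuallyEq
    filter_upwards [Ioi_mem_nhds hy] with z hz
    exact pt_eq hsm hz)

lemma hasDerivAt_py_t {t y : ℝ} (hy : 0 < y) :
    HasDerivAt (fun s => py u s y) (pty u t y) t := by
  have he : (fun s => py u s y) = fun s => PYf u (s, y) := funext fun s => py_eq hsm hy
  have h := lineT (hPYdiff hsm (p := (t, y)) hy)
  rw [← he] at h
  have h2 : pty u t y = fderiv ℝ (PYf u) (t, y) ((1:ℝ), (0:ℝ)) := by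
    rw [fderiv_symm hsm hy]
    exact pty_eq' hsm hy
  rw [h2]; exact h

lemma ptt_eq {t y : ℝ} (hy : 0 < y) : ptt u t y = fderiv ℝ (PTf u) (t, y) ((1:ℝ), (0:ℝ)) :=
  ((hasDerivAt_pt_t hsm hy).unique
    (by
      have he : (fun s => pt u s y) = fun s => PTf u (s, y) := funext fun s => pt_eq hsm hy
      rw [he]; exact lineT (hPTdiff hsm (p := (t, y)) hy)))

lemma pty_eq {t y : ℝ} (hy : 0 < y) : pty u t y = fderiv ℝ (PTf u) (t, y) ((0:ℝ), (1:ℝ)) :=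
  (hasDerivAt_pt_y hsm hy).unique (by
    apply (lineY (hPTdiff hsm (p := (t, y)) hy)).congr_of_eventuallyEq
    filter_upwards [Ioi_mem_nhds hy] with z hz
    exact pt_eq hsm hz)

-- continuity in y for fixed t
lemma contOn_pt (t : ℝ) : ContinuousOn (fun y => pt u t y) (Ioi (0:ℝ)) := by
  have hline : Continuous fun y : ℝ => ((t, y) : ℝ × ℝ) := by continuity
  have h : ContinuousOn (fun y : ℝ => PTf u (t, y)) (Ioi (0:ℝ)) :=
    (hPT2 hsm).continuousOn.comp hline.continuousOn (fun y hy => hy)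
  exact h.congr fun y hy => pt_eq hsm hy

lemma contOn_py (t : ℝ) : ContinuousOn (fun y => py u t y) (Ioi (0:ℝ)) := by
  have hline : Continuous fun y : ℝ => ((t, y) : ℝ × ℝ) := by continuity
  have h : ContinuousOn (fun y : ℝ => PYf u (t, y)) (Ioi (0:ℝ)) :=
    (hPY2 hsm).continuousOn.comp hline.continuousOn (fun y hy => hy)
  exact h.congr fun y hy => py_eq hsm hy

lemma contOn_ptt (t : ℝ) : ContinuousOn (fun y => ptt u t y) (Ioi (0:ℝ)) := by
  have hline : Continuous fun y : ℝ => ((t, y) : ℝ × ℝ) := by continuity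
  have h1 : ContDiffOn ℝ 1 (fderiv ℝ (PTf u)) {p : ℝ × ℝ | 0 < p.2} :=
    (hPT2 hsm).fderiv_of_isOpen isOpenS (by norm_num)
  have h2 : ContinuousOn (fun p : ℝ × ℝ => fderiv ℝ (PTf u) p ((1:ℝ), (0:ℝ)))
      {p : ℝ × ℝ | 0 < p.2} := h1.continuousOn.clm_apply continuousOn_const
  have h : ContinuousOn (fun y : ℝ => fderiv ℝ (PTf u) (t, y) ((1:ℝ), (0:ℝ))) (Ioi (0:ℝ)) :=
    h2.comp hline.continuousOn (fun y hy => hy)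
  exact h.congr fun y hy => ptt_eq hsm hy

lemma contOn_pty (t : ℝ) : ContinuousOn (fun y => pty u t y) (Ioi (0:ℝ)) := by
  have hline : Continuous fun y : ℝ => ((t, y) : ℝ × ℝ) := by continuity
  have h1 : ContDiffOn ℝ 1 (fderiv ℝ (PTf u)) {p : ℝ × ℝ | 0 < p.2} :=
    (hPT2 hsm).fderiv_of_isOpen isOpenS (by norm_num)
  have h2 : ContinuousOn (fun p : ℝ × ℝ => fderiv ℝ (PTf u) p ((0:ℝ), (1:ℝ)))
      {p : ℝ × ℝ | 0 < p.2} := h1.continuousOn.clm_apply continuousOn_const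
  have h : ContinuousOn (fun y : ℝ => fderiv ℝ (PTf u) (t, y) ((0:ℝ), (1:ℝ))) (Ioi (0:ℝ)) :=
    h2.comp hline.continuousOn (fun y hy => hy)
  exact h.congr fun y hy => pty_eq hsm hy

end Stmt7Aux

/-- Dissipation of the Hamiltonian: under the stated decay and domination hypotheses,
`V` is differentiable with `V'(t) = -(n-1) tanh t ∫₀^∞ y^a (∂_t u)² dy`.
Here the boundary condition is `lim_{y→0⁺} y^a ∂_y u = -(1/d_γ) f(u(t,0))` with
`f = -F'`, i.e. the limit equals `(1/d_γ) F'(u(t,0))`. -/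
theorem stmt7 (n : ℕ) (hn : 2 ≤ n) (γ : ℝ) (hγ : γ ∈ Set.Ioo (0:ℝ) 1)
    (F : ℝ → ℝ) (hFs : ContDiff ℝ (⊤ : ℕ∞) F) (u : ℝ → ℝ → ℝ)
    (hsm : ContDiffOn ℝ 3 (fun p : ℝ × ℝ => u p.1 p.2) {p : ℝ × ℝ | 0 < p.2})
    (heq : ∀ t y : ℝ, 0 < y → Ha n (1 - 2*γ) u t y = 0)
    (hcont : ContinuousOn (fun p : ℝ × ℝ => u p.1 p.2) {p : ℝ × ℝ | 0 ≤ p.2})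
    (hptc : ContinuousOn (fun p : ℝ × ℝ => pt u p.1 p.2) {p : ℝ × ℝ | 0 ≤ p.2})
    (htr : Differentiable ℝ (fun t => u t 0))
    (hbc1 : ∀ t : ℝ, Tendsto (fun y : ℝ => y ^ (1 - 2*γ) * py u t y) (𝓝[>] (0:ℝ))
      (𝓝 ((1 / dgamma γ) * deriv F (u t 0))))
    (hbc2 : ∀ t : ℝ, Tendsto (fun y : ℝ => y ^ (1 - 2*γ) * py u t y * pt u t y)
      atTop (𝓝 0))
    (hbc3 : ∀ t : ℝ, Tendsto (fun y : ℝ => y ^ (1 - 2*γ) * py u t y * pt u t y)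
      (𝓝[>] (0:ℝ)) (𝓝 ((1 / dgamma γ) * deriv F (u t 0) * pt u t 0)))
    (hdom : ∀ c d : ℝ, ∃ g : ℝ → ℝ, IntegrableOn g (Set.Ioi 0) ∧
      ∀ t ∈ Set.Icc c d, ∀ y : ℝ, 0 < y →
        y ^ (1 - 2*γ) * (|pt u t y| ^ 2 + |py u t y| ^ 2 + |pt u t y| * |ptt u t y|
          + |py u t y| * |pty u t y|) ≤ g y) :
    ∀ t : ℝ, HasDerivAt (Vham (1 - 2*γ) (dgamma γ) F u)
      (-(((n : ℝ) - 1)) * Real.tanh t * ∫ y in Set.Ioi (0:ℝ), y ^ (1 - 2*γ) * (pt u t y) ^ 2)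
      t := by
  intro t₀
  have ht₀Icc : t₀ ∈ Set.Icc (t₀ - 1) (t₀ + 1) := by constructor <;> linarith
  obtain ⟨g, hgint, hgbd⟩ := hdom (t₀ - 1) (t₀ + 1)
  -- continuity facts in `y` for fixed `t`
  have cpt : ∀ t, ContinuousOn (fun y => pt u t y) (Ioi (0:ℝ)) :=
    fun t => Stmt7Aux.contOn_pt hsm t
  have cpy : ∀ t, ContinuousOn (fun y => py u t y) (Ioi (0:ℝ)) :=
    fun t => Stmt7Aux.contOn_py hsm t
  have cptt := Stmt7Aux.contOn_ptt hsm t₀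
  have cpty := Stmt7Aux.contOn_pty hsm t₀
  have crp : ContinuousOn (fun y : ℝ => y ^ (1 - 2*γ)) (Ioi (0:ℝ)) :=
    continuousOn_id.rpow_const (fun y hy => Or.inl (ne_of_gt hy))
  -- the two bounds we extract from `g`
  have key_bd : ∀ t ∈ Set.Icc (t₀ - 1) (t₀ + 1), ∀ y : ℝ, 0 < y →
      y ^ (1 - 2*γ) * (|pt u t y| * |ptt u t y| + |py u t y| * |pty u t y|) ≤ g y ∧
      y ^ (1 - 2*γ) * (|pt u t y| ^ 2 + |py u t y| ^ 2) ≤ g y := by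
    intro t ht y hy
    have h := hgbd t ht y hy
    have h1 : (0:ℝ) ≤ y ^ (1 - 2*γ) := Real.rpow_nonneg (le_of_lt hy) _
    have e1 : 0 ≤ y ^ (1 - 2*γ) * (|pt u t y| ^ 2 + |py u t y| ^ 2) :=
      mul_nonneg h1 (by positivity)
    have e2 : 0 ≤ y ^ (1 - 2*γ) * (|pt u t y| * |ptt u t y| + |py u t y| * |pty u t y|) :=
      mul_nonneg h1 (by positivity)
    constructor <;> nlinarith [h, e1, e2]
  -- measurability
  have mφ : ∀ t, AEStronglyMeasurable
      (fun y : ℝ => y ^ (1 - 2*γ) * ((pt u t y) ^ 2 - (py u t y) ^ 2))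
      (volume.restrict (Ioi 0)) := fun t =>
    ((crp.mul (((cpt t).pow 2).sub ((cpy t).pow 2))).aestronglyMeasurable measurableSet_Ioi)
  have mψ2 : AEStronglyMeasurable
      (fun y : ℝ => y ^ (1 - 2*γ) *
        (2 * pt u t₀ y * ptt u t₀ y - 2 * py u t₀ y * pty u t₀ y))
      (volume.restrict (Ioi 0)) :=
    ((crp.mul ((((continuousOn_const.mul (cpt t₀)).mul cptt)).sub
      (((continuousOn_const.mul (cpy t₀)).mul cpty)))).aestronglyMeasurable measurableSet_Ioi)
  have mψ : AEStronglyMeasurable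
      (fun y : ℝ => y ^ (1 - 2*γ) * (pt u t₀ y * ptt u t₀ y - py u t₀ y * pty u t₀ y))
      (volume.restrict (Ioi 0)) :=
    ((crp.mul ((((cpt t₀).mul cptt)).sub (((cpy t₀).mul cpty)))).aestronglyMeasurable
      measurableSet_Ioi)
  have mq : AEStronglyMeasurable (fun y : ℝ => y ^ (1 - 2*γ) * (pt u t₀ y) ^ 2)
      (volume.restrict (Ioi 0)) :=
    ((crp.mul ((cpt t₀).pow 2)).aestronglyMeasurable measurableSet_Ioi)
  -- integrability of the integrand of V at t₀
  have hφint : Integrable (fun y : ℝ => y ^ (1 - 2*γ) * ((pt u t₀ y) ^ 2 - (py u t₀ y) ^ 2))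
      (volume.restrict (Ioi 0)) := by
    refine hgint.mono' (mφ t₀) ?_
    refine (ae_restrict_iff' measurableSet_Ioi).2 (ae_of_all _ fun y hy => ?_)
    have h2 := (key_bd t₀ ht₀Icc y hy).2
    have h1 : (0:ℝ) ≤ y ^ (1 - 2*γ) := Real.rpow_nonneg (le_of_lt hy) _
    have h3 : |(pt u t₀ y) ^ 2 - (py u t₀ y) ^ 2| ≤ |pt u t₀ y| ^ 2 + |py u t₀ y| ^ 2 :=
      calc |(pt u t₀ y) ^ 2 - (py u t₀ y) ^ 2| ≤ |(pt u t₀ y) ^ 2| + |(py u t₀ y) ^ 2| :=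
            abs_sub _ _
        _ = |pt u t₀ y| ^ 2 + |py u t₀ y| ^ 2 := by rw [abs_pow, abs_pow]
    calc ‖y ^ (1 - 2*γ) * ((pt u t₀ y) ^ 2 - (py u t₀ y) ^ 2)‖
        = y ^ (1 - 2*γ) * |(pt u t₀ y) ^ 2 - (py u t₀ y) ^ 2| := by
          rw [Real.norm_eq_abs, abs_mul, abs_of_nonneg h1]
      _ ≤ y ^ (1 - 2*γ) * (|pt u t₀ y| ^ 2 + |py u t₀ y| ^ 2) :=
          mul_le_mul_of_nonneg_left h3 h1
      _ ≤ g y := h2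
  -- integrability of ψ and q
  have hψint : Integrable
      (fun y : ℝ => y ^ (1 - 2*γ) * (pt u t₀ y * ptt u t₀ y - py u t₀ y * pty u t₀ y))
      (volume.restrict (Ioi 0)) := by
    refine hgint.mono' mψ ?_
    refine (ae_restrict_iff' measurableSet_Ioi).2 (ae_of_all _ fun y hy => ?_)
    have h2 := (key_bd t₀ ht₀Icc y hy).1
    have h1 : (0:ℝ) ≤ y ^ (1 - 2*γ) := Real.rpow_nonneg (le_of_lt hy) _
    have h3 : |pt u t₀ y * ptt u t₀ y - py u t₀ y * pty u t₀ y| ≤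
        |pt u t₀ y| * |ptt u t₀ y| + |py u t₀ y| * |pty u t₀ y| := by
      simpa [abs_mul] using abs_sub (pt u t₀ y * ptt u t₀ y) (py u t₀ y * pty u t₀ y)
    calc ‖y ^ (1 - 2*γ) * (pt u t₀ y * ptt u t₀ y - py u t₀ y * pty u t₀ y)‖
        = y ^ (1 - 2*γ) * |pt u t₀ y * ptt u t₀ y - py u t₀ y * pty u t₀ y| := by
          rw [Real.norm_eq_abs, abs_mul, abs_of_nonneg h1]
      _ ≤ y ^ (1 - 2*γ) * (|pt u t₀ y| * |ptt u t₀ y| + |py u t₀ y| * |pty u t₀ y|) :=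
          mul_le_mul_of_nonneg_left h3 h1
      _ ≤ g y := h2
  have hqint : Integrable (fun y : ℝ => y ^ (1 - 2*γ) * (pt u t₀ y) ^ 2)
      (volume.restrict (Ioi 0)) := by
    refine hgint.mono' mq ?_
    refine (ae_restrict_iff' measurableSet_Ioi).2 (ae_of_all _ fun y hy => ?_)
    have h2 := (key_bd t₀ ht₀Icc y hy).2
    have h1 : (0:ℝ) ≤ y ^ (1 - 2*γ) := Real.rpow_nonneg (le_of_lt hy) _
    calc ‖y ^ (1 - 2*γ) * (pt u t₀ y) ^ 2‖
        = y ^ (1 - 2*γ) * |pt u t₀ y| ^ 2 := by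
          rw [Real.norm_eq_abs, abs_mul, abs_of_nonneg h1, abs_pow]
      _ ≤ y ^ (1 - 2*γ) * (|pt u t₀ y| ^ 2 + |py u t₀ y| ^ 2) := by
          refine mul_le_mul_of_nonneg_left ?_ h1
          nlinarith [sq_nonneg (|py u t₀ y|)]
      _ ≤ g y := h2
  -- differentiation under the integral sign
  have h_bound : ∀ᵐ y ∂(volume.restrict (Ioi (0:ℝ))), ∀ x ∈ Metric.ball t₀ 1,
      ‖y ^ (1 - 2*γ) * (2 * pt u x y * ptt u x y - 2 * py u x y * pty u x y)‖ ≤ 2 * g y := by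
    refine (ae_restrict_iff' measurableSet_Ioi).2 (ae_of_all _ fun y hy x hx => ?_)
    have hxI : x ∈ Set.Icc (t₀ - 1) (t₀ + 1) := by
      have := Real.dist_eq x t₀ ▸ Metric.mem_ball.1 hx
      constructor <;> [linarith [abs_lt.1 this |>.1]; linarith [abs_lt.1 this |>.2]]
    have h2 := (key_bd x hxI y hy).1
    have h1 : (0:ℝ) ≤ y ^ (1 - 2*γ) := Real.rpow_nonneg (le_of_lt hy) _
    have h3 : |2 * pt u x y * ptt u x y - 2 * py u x y * pty u x y| ≤
        2 * (|pt u x y| * |ptt u x y| + |py u x y| * |pty u x y|) := by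
      have := abs_sub (2 * pt u x y * ptt u x y) (2 * py u x y * pty u x y)
      simp only [abs_mul, abs_two] at this
      linarith
    calc ‖y ^ (1 - 2*γ) * (2 * pt u x y * ptt u x y - 2 * py u x y * pty u x y)‖
        = y ^ (1 - 2*γ) * |2 * pt u x y * ptt u x y - 2 * py u x y * pty u x y| := by
          rw [Real.norm_eq_abs, abs_mul, abs_of_nonneg h1]
      _ ≤ y ^ (1 - 2*γ) * (2 * (|pt u x y| * |ptt u x y| + |py u x y| * |pty u x y|)) :=
          mul_le_mul_of_nonneg_left h3 h1
      _ = 2 * (y ^ (1 - 2*γ) * (|pt u x y| * |ptt u x y| + |py u x y| * |pty u x y|)) := by ring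
      _ ≤ 2 * g y := by linarith
  have h_diff : ∀ᵐ y ∂(volume.restrict (Ioi (0:ℝ))), ∀ x ∈ Metric.ball t₀ 1,
      HasDerivAt (fun x => y ^ (1 - 2*γ) * ((pt u x y) ^ 2 - (py u x y) ^ 2))
        (y ^ (1 - 2*γ) * (2 * pt u x y * ptt u x y - 2 * py u x y * pty u x y)) x := by
    refine (ae_restrict_iff' measurableSet_Ioi).2 (ae_of_all _ fun y hy x _ => ?_)
    have hy' : (0:ℝ) < y := hy
    have hp := Stmt7Aux.hasDerivAt_pt_t hsm (t := x) hy'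
    have hq := Stmt7Aux.hasDerivAt_py_t hsm (t := x) hy'
    have H := ((hp.pow 2).sub (hq.pow 2)).const_mul (y ^ (1 - 2*γ))
    refine H.congr_deriv ?_
    push_cast
    ring
  have main := hasDerivAt_integral_of_dominated_loc_of_deriv_le (μ := volume.restrict (Ioi 0))
      (x₀ := t₀) (bound := fun y => 2 * g y)
      (F := fun x y => y ^ (1 - 2*γ) * ((pt u x y) ^ 2 - (py u x y) ^ 2))
      (F' := fun x y => y ^ (1 - 2*γ) *
        (2 * pt u x y * ptt u x y - 2 * py u x y * pty u x y))
      (Metric.ball_mem_nhds t₀ one_pos) (Eventually.of_forall fun x => mφ x) hφint mψ2 h_bound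
      (hgint.const_mul 2) h_diff
  -- integration by parts at t₀
  set c : ℝ := ((n:ℝ) - 1) * Real.tanh t₀ with hcdef
  set L : ℝ := (1 / dgamma γ) * deriv F (u t₀ 0) * pt u t₀ 0 with hLdef
  set f : ℝ → ℝ := fun y => if y = 0 then -L
      else -(y ^ (1 - 2*γ) * py u t₀ y * pt u t₀ y) with hfdef
  have hf0 : f 0 = -L := by simp [hfdef]
  have hcontf : ContinuousWithinAt f (Ici (0:ℝ)) 0 := by
    rw [ContinuousWithinAt, ← Set.Ioi_insert, nhdsWithin_insert, hf0, tendsto_sup]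
    constructor
    · simpa [hf0] using tendsto_pure_nhds f 0
    · have hneg : Tendsto (fun y : ℝ => -(y ^ (1 - 2*γ) * py u t₀ y * pt u t₀ y))
          (𝓝[>] (0:ℝ)) (𝓝 (-L)) := (hbc3 t₀).neg
      refine Filter.Tendsto.congr' ?_ hneg
      filter_upwards [self_mem_nhdsWithin] with y hy
      simp [hfdef, ne_of_gt (mem_Ioi.mp hy)]
  have hderivf : ∀ y ∈ Ioi (0:ℝ), HasDerivAt f
      (y ^ (1 - 2*γ) * (pt u t₀ y * ptt u t₀ y - py u t₀ y * pty u t₀ y) +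
        c * (y ^ (1 - 2*γ) * (pt u t₀ y) ^ 2)) y := by
    intro y hy
    have hy' : (0:ℝ) < y := hy
    have hy0 : y ≠ 0 := ne_of_gt hy'
    have h1 : HasDerivAt (fun z : ℝ => z ^ (1 - 2*γ))
        ((1 - 2*γ) * y ^ ((1 - 2*γ) - 1)) y :=
      Real.hasDerivAt_rpow_const (Or.inl hy0)
    have h2 := Stmt7Aux.hasDerivAt_py_y hsm (t := t₀) hy'
    have h3 := Stmt7Aux.hasDerivAt_pt_y hsm (t := t₀) hy'
    have H := ((h1.mul h2).mul h3).neg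
    have hfeq : f =ᶠ[𝓝 y]
        fun z => -(z ^ (1 - 2*γ) * py u t₀ z * pt u t₀ z) := by
      filter_upwards [Ioi_mem_nhds hy'] with z hz
      simp [hfdef, ne_of_gt (mem_Ioi.mp hz)]
    have H2 := H.congr_of_eventuallyEq hfeq
    refine H2.congr_deriv ?_
    simp only [Pi.mul_apply]
    have hpde : pyy u t₀ y = -(((1 - 2*γ) / y) * py u t₀ y) - ptt u t₀ y - c * pt u t₀ y := by
      have h := heq t₀ y hy'
      simp only [Ha] at h
      rw [hcdef]
      linarith
    rw [hpde, Real.rpow_sub_one hy0]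
    set A := y ^ (1 - 2*γ) with hAdef
    ring
  have hf'int : IntegrableOn (fun y : ℝ =>
      y ^ (1 - 2*γ) * (pt u t₀ y * ptt u t₀ y - py u t₀ y * pty u t₀ y) +
        c * (y ^ (1 - 2*γ) * (pt u t₀ y) ^ 2)) (Ioi (0:ℝ)) :=
    hψint.add (hqint.const_mul c)
  have hftop : Tendsto f atTop (𝓝 0) := by
    have hneg : Tendsto (fun y : ℝ => -(y ^ (1 - 2*γ) * py u t₀ y * pt u t₀ y))
        atTop (𝓝 (-0)) := (hbc2 t₀).neg
    rw [neg_zero] at hneg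
    refine Filter.Tendsto.congr' ?_ hneg
    filter_upwards [eventually_gt_atTop (0:ℝ)] with y hy
    simp [hfdef, ne_of_gt hy]
  have ibp : (∫ y in Ioi (0:ℝ),
      (y ^ (1 - 2*γ) * (pt u t₀ y * ptt u t₀ y - py u t₀ y * pty u t₀ y) +
        c * (y ^ (1 - 2*γ) * (pt u t₀ y) ^ 2))) = L := by
    have h := integral_Ioi_of_hasDerivAt_of_tendsto hcontf hderivf hf'int hftop
    rw [h, hf0]
    ring
  have hsplit : (∫ y in Ioi (0:ℝ),
      (y ^ (1 - 2*γ) * (pt u t₀ y * ptt u t₀ y - py u t₀ y * pty u t₀ y) +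
        c * (y ^ (1 - 2*γ) * (pt u t₀ y) ^ 2))) =
      (∫ y in Ioi (0:ℝ),
        y ^ (1 - 2*γ) * (pt u t₀ y * ptt u t₀ y - py u t₀ y * pty u t₀ y)) +
      c * ∫ y in Ioi (0:ℝ), y ^ (1 - 2*γ) * (pt u t₀ y) ^ 2 := by
    rw [integral_add hψint (hqint.const_mul c), integral_const_mul]
  have h2ψ : (∫ y in Ioi (0:ℝ), y ^ (1 - 2*γ) *
      (2 * pt u t₀ y * ptt u t₀ y - 2 * py u t₀ y * pty u t₀ y)) =
      2 * ∫ y in Ioi (0:ℝ),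
        y ^ (1 - 2*γ) * (pt u t₀ y * ptt u t₀ y - py u t₀ y * pty u t₀ y) := by
    rw [← integral_const_mul]
    congr 1
    funext y
    ring
  -- trace term
  have htr0 : HasDerivAt (fun t => u t 0) (pt u t₀ 0) t₀ := (htr t₀).hasDerivAt
  have hFd : HasDerivAt F (deriv F (u t₀ 0)) (u t₀ 0) :=
    (hFs.differentiable (by simp) (u t₀ 0)).hasDerivAt
  have htrace : HasDerivAt (fun t => (1 / dgamma γ) * (F (u t 0) - F 1))
      ((1 / dgamma γ) * (deriv F (u t₀ 0) * pt u t₀ 0)) t₀ :=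
    ((hFd.comp t₀ htr0).sub_const (F 1)).const_mul _
  have hV := (main.2.const_mul (1/2 : ℝ)).sub htrace
  have hval : (1/2 : ℝ) * (∫ y in Ioi (0:ℝ), y ^ (1 - 2*γ) *
        (2 * pt u t₀ y * ptt u t₀ y - 2 * py u t₀ y * pty u t₀ y)) -
      (1 / dgamma γ) * (deriv F (u t₀ 0) * pt u t₀ 0) =
      -(((n : ℝ) - 1)) * Real.tanh t₀ *
        ∫ y in Set.Ioi (0:ℝ), y ^ (1 - 2*γ) * (pt u t₀ y) ^ 2 := by
    rw [h2ψ]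
    have hψval : (∫ y in Ioi (0:ℝ),
        y ^ (1 - 2*γ) * (pt u t₀ y * ptt u t₀ y - py u t₀ y * pty u t₀ y)) =
        L - c * ∫ y in Ioi (0:ℝ), y ^ (1 - 2*γ) * (pt u t₀ y) ^ 2 := by
      rw [← ibp, hsplit]; ring
    rw [hψval, hLdef, hcdef]
    ring
  rw [← hval]
  exact hV
end

section
/- Let u : ℝ × (0,∞) → ℝ be three times continuously differentiable with H_a u = 0 on ℝ × (0,∞), extending continuously together with ∂_t u to ℝ × [0,∞), with t ↦ u(t,0) differentiable, and such that for every t ∈ ℝ: lim_{y→0⁺} y^a ∂_y u(t,y) = −(1/d_γ) f(u(t,0)), lim_{y→∞} y^a ∂_y u(t,y) ∂_t u(t,y) = 0, and lim_{y→0⁺} y^a ∂_y u(t,y) ∂_t u(t,y) = −(1/d_γ) f(u(t,0)) ∂_t u(t,0). Assume that for every compact interval I ⊂ ℝ there is an integrable function g : (0,∞) → ℝ such that y^a(|∂_t u|² + |∂_y u|² + |∂_t u||∂_{tt}u| + |∂_y u||∂_{ty}u|)(t,y) ≤ g(y) for all t ∈ I and y > 0. Define V(t) = (1/2) ∫₀^∞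 y^a ((∂_t u(t,y))² − (∂_y u(t,y))²) dy − (1/d_γ)(F(u(t,0)) − F(1)). Then for every t ∈ ℝ, d/dt [cosh^{n−1}(t) · V(t)] = (n−1) cosh^{n−2}(t) sinh(t) · [ −(1/2) ∫₀^∞ y^a ((∂_t u(t,y))² + (∂_y u(t,y))²) dy − (1/d_γ)(F(u(t,0)) − F(1)) ]. -/
open Real Filter MeasureTheory Set Topology

namespace Stmt8Aux

lemma hasDerivAt_fst {f : ℝ × ℝ → ℝ} {t y : ℝ} (hf : DifferentiableAt ℝ f (t, y)) :
    HasDerivAt (fun s => f (s, y)) (fderiv ℝ f (t, y) (1, 0)) t :=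
  hf.hasFDerivAt.comp_hasDerivAt t ((hasDerivAt_id t).prodMk (hasDerivAt_const t y))

lemma hasDerivAt_snd {f : ℝ × ℝ → ℝ} {t y : ℝ} (hf : DifferentiableAt ℝ f (t, y)) :
    HasDerivAt (fun z => f (t, z)) (fderiv ℝ f (t, y) (0, 1)) y :=
  hf.hasFDerivAt.comp_hasDerivAt y ((hasDerivAt_const y t).prodMk (hasDerivAt_id y))

variable (u : ℝ → ℝ → ℝ)

noncomputable def Uc : ℝ × ℝ → ℝ := fun p => u p.1 p.2
noncomputable def Pm : ℝ × ℝ → ℝ := fun p => fderiv ℝ (Uc u) p (1, 0)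
noncomputable def Qm : ℝ × ℝ → ℝ := fun p => fderiv ℝ (Uc u) p (0, 1)

lemma isOpenS : IsOpen {p : ℝ × ℝ | 0 < p.2} := isOpen_lt continuous_const continuous_snd

variable {u}
variable (hsm : ContDiffOn ℝ 3 (fun p : ℝ × ℝ => u p.1 p.2) {p : ℝ × ℝ | 0 < p.2})
include hsm

lemma hsmU : ContDiffOn ℝ 3 (Uc u) {p : ℝ × ℝ | 0 < p.2} := hsm

lemma diffU {t y : ℝ} (hy : 0 < y) : DifferentiableAt ℝ (Uc u) (t, y) :=
  ((hsmU hsm).differentiableOn (by norm_num)).differentiableAt ((isOpenS).mem_nhds hy)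

lemma pt_hasDerivAt {t y : ℝ} (hy : 0 < y) :
    HasDerivAt (fun s => u s y) (Pm u (t, y)) t :=
  hasDerivAt_fst (diffU hsm hy)

lemma py_hasDerivAt {t y : ℝ} (hy : 0 < y) :
    HasDerivAt (fun z => u t z) (Qm u (t, y)) y :=
  hasDerivAt_snd (diffU hsm hy)

lemma pt_eq {t y : ℝ} (hy : 0 < y) : pt u t y = Pm u (t, y) :=
  (pt_hasDerivAt hsm hy).deriv

lemma py_eq {t y : ℝ} (hy : 0 < y) : py u t y = Qm u (t, y) :=
  (py_hasDerivAt hsm hy).deriv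

lemma contDiffOn_Pm : ContDiffOn ℝ 2 (Pm u) {p : ℝ × ℝ | 0 < p.2} :=
  ((hsmU hsm).fderiv_of_isOpen (isOpenS) (by norm_num)).clm_apply contDiffOn_const

lemma contDiffOn_Qm : ContDiffOn ℝ 2 (Qm u) {p : ℝ × ℝ | 0 < p.2} :=
  ((hsmU hsm).fderiv_of_isOpen (isOpenS) (by norm_num)).clm_apply contDiffOn_const

lemma diffPm {t y : ℝ} (hy : 0 < y) : DifferentiableAt ℝ (Pm u) (t, y) :=
  ((contDiffOn_Pm hsm).differentiableOn (by norm_num)).differentiableAt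
    ((isOpenS).mem_nhds hy)

lemma diffQm {t y : ℝ} (hy : 0 < y) : DifferentiableAt ℝ (Qm u) (t, y) :=
  ((contDiffOn_Qm hsm).differentiableOn (by norm_num)).differentiableAt
    ((isOpenS).mem_nhds hy)

lemma ptt_hasDerivAt {t y : ℝ} (hy : 0 < y) :
    HasDerivAt (fun s => pt u s y) (ptt u t y) t := by
  have h : (fun s => pt u s y) = fun s => Pm u (s, y) :=
    funext fun s => pt_eq hsm hy
  have h2 : HasDerivAt (fun s => pt u s y) (fderiv ℝ (Pm u) (t, y) (1, 0)) t := by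
    rw [h]; exact hasDerivAt_fst (diffPm hsm hy)
  have : ptt u t y = fderiv ℝ (Pm u) (t, y) (1, 0) := h2.deriv
  rw [this]; exact h2

lemma pty_hasDerivAt {t y : ℝ} (hy : 0 < y) :
    HasDerivAt (fun z => pt u t z) (pty u t y) y := by
  have h2 : HasDerivAt (fun z => pt u t z) (fderiv ℝ (Pm u) (t, y) (0, 1)) y := by
    refine (hasDerivAt_snd (diffPm hsm hy)).congr_of_eventuallyEq ?_
    filter_upwards [eventually_gt_nhds hy] with z hz
    exact pt_eq hsm hz
  have : pty u t y = fderiv ℝ (Pm u) (t, y) (0, 1) := h2.deriv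
  rw [this]; exact h2

lemma pty_eq {t y : ℝ} (hy : 0 < y) : pty u t y = fderiv ℝ (Pm u) (t, y) (0, 1) := by
  have h2 : HasDerivAt (fun z => pt u t z) (fderiv ℝ (Pm u) (t, y) (0, 1)) y := by
    refine (hasDerivAt_snd (diffPm hsm hy)).congr_of_eventuallyEq ?_
    filter_upwards [eventually_gt_nhds hy] with z hz
    exact pt_eq hsm hz
  exact h2.deriv

lemma pyy_hasDerivAt {t y : ℝ} (hy : 0 < y) :
    HasDerivAt (fun z => py u t z) (pyy u t y) y := by
  have h2 : HasDerivAt (fun z => py u t z) (fderiv ℝ (Qm u) (t, y) (0, 1)) y := by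
    refine (hasDerivAt_snd (diffQm hsm hy)).congr_of_eventuallyEq ?_
    filter_upwards [eventually_gt_nhds hy] with z hz
    exact py_eq hsm hz
  have : pyy u t y = fderiv ℝ (Qm u) (t, y) (0, 1) := h2.deriv
  rw [this]; exact h2

/-- mixed second derivative symmetry: ∂ₜ(py) = pty. -/
lemma pyt_hasDerivAt {t y : ℝ} (hy : 0 < y) :
    HasDerivAt (fun s => py u s y) (pty u t y) t := by
  have h1 : (fun s => py u s y) = fun s => Qm u (s, y) :=
    funext fun s => py_eq hsm hy
  have h2 : HasDerivAt (fun s => Qm u (s, y)) (fderiv ℝ (Qm u) (t, y) (1, 0)) t :=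
    hasDerivAt_fst (diffQm hsm hy)
  have hD : ContDiffOn ℝ 2 (fderiv ℝ (Uc u)) {p : ℝ × ℝ | 0 < p.2} :=
    (hsmU hsm).fderiv_of_isOpen (isOpenS) (by norm_num)
  have hDdiff : DifferentiableAt ℝ (fderiv ℝ (Uc u)) (t, y) :=
    (hD.differentiableOn (by norm_num)).differentiableAt ((isOpenS).mem_nhds hy)
  have hDf : HasFDerivAt (fderiv ℝ (Uc u)) (fderiv ℝ (fderiv ℝ (Uc u)) (t, y)) (t, y) :=
    hDdiff.hasFDerivAt
  have hev : ∀ᶠ p in 𝓝 (t, y), HasFDerivAt (Uc u) (fderiv ℝ (Uc u) p) p := by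
    filter_upwards [(isOpenS).mem_nhds hy] with p hp
    exact (((hsmU hsm).differentiableOn (by norm_num)).differentiableAt
      ((isOpenS).mem_nhds hp)).hasFDerivAt
  have hsymm := second_derivative_symmetric_of_eventually hev hDf
    (((1 : ℝ), (0 : ℝ))) (((0 : ℝ), (1 : ℝ)))
  -- fderiv of Pm and Qm via clm apply
  have hPf : HasFDerivAt (Pm u)
      ((ContinuousLinearMap.apply ℝ ℝ (((1 : ℝ), (0 : ℝ)))).comp
        (fderiv ℝ (fderiv ℝ (Uc u)) (t, y))) (t, y) :=
    (ContinuousLinearMap.apply ℝ ℝ (((1 : ℝ), (0 : ℝ)))).hasFDerivAt.comp (t, y) hDf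
  have hQf : HasFDerivAt (Qm u)
      ((ContinuousLinearMap.apply ℝ ℝ (((0 : ℝ), (1 : ℝ)))).comp
        (fderiv ℝ (fderiv ℝ (Uc u)) (t, y))) (t, y) :=
    (ContinuousLinearMap.apply ℝ ℝ (((0 : ℝ), (1 : ℝ)))).hasFDerivAt.comp (t, y) hDf
  have hPder : fderiv ℝ (Pm u) (t, y) (0, 1)
      = fderiv ℝ (fderiv ℝ (Uc u)) (t, y) (0, 1) (1, 0) := by
    rw [hPf.fderiv]; rfl
  have hQder : fderiv ℝ (Qm u) (t, y) (1, 0)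
      = fderiv ℝ (fderiv ℝ (Uc u)) (t, y) (1, 0) (0, 1) := by
    rw [hQf.fderiv]; rfl
  rw [h1, pty_eq hsm hy, hPder, ← hsymm, ← hQder]
  exact h2



section cont

omit hsm in
lemma contOn_comp2 {f : ℝ × ℝ → ℝ} (hf : ContinuousOn f {p : ℝ × ℝ | 0 < p.2}) (t : ℝ) :
    ContinuousOn (fun z => f (t, z)) (Ioi 0) :=
  hf.comp ((continuous_const.prodMk continuous_id).continuousOn) (fun z hz => hz)

lemma contOn_pt (t : ℝ) : ContinuousOn (fun y => pt u t y) (Ioi 0) :=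
  (contOn_comp2 (contDiffOn_Pm hsm).continuousOn t).congr fun y hy => pt_eq hsm hy

lemma contOn_py (t : ℝ) : ContinuousOn (fun y => py u t y) (Ioi 0) :=
  (contOn_comp2 (contDiffOn_Qm hsm).continuousOn t).congr fun y hy => py_eq hsm hy

lemma ptt_eq {t y : ℝ} (hy : 0 < y) : ptt u t y = fderiv ℝ (Pm u) (t, y) (1, 0) := by
  have h : (fun s => pt u s y) = fun s => Pm u (s, y) := funext fun s => pt_eq hsm hy
  have h2 : HasDerivAt (fun s => pt u s y) (fderiv ℝ (Pm u) (t, y) (1, 0)) t := by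
    rw [h]; exact hasDerivAt_fst (diffPm hsm hy)
  exact h2.deriv

lemma pyy_eq {t y : ℝ} (hy : 0 < y) : pyy u t y = fderiv ℝ (Qm u) (t, y) (0, 1) := by
  have h2 : HasDerivAt (fun z => py u t z) (fderiv ℝ (Qm u) (t, y) (0, 1)) y := by
    refine (hasDerivAt_snd (diffQm hsm hy)).congr_of_eventuallyEq ?_
    filter_upwards [eventually_gt_nhds hy] with z hz
    exact py_eq hsm hz
  exact h2.deriv

lemma contOn_fPm : ContinuousOn (fun p => fderiv ℝ (Pm u) p (1, 0))
    {p : ℝ × ℝ | 0 < p.2} :=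
  ((contDiffOn_Pm hsm).continuousOn_fderiv_of_isOpen isOpenS (by norm_num)).clm_apply
    continuousOn_const

lemma contOn_fPm' : ContinuousOn (fun p => fderiv ℝ (Pm u) p (0, 1))
    {p : ℝ × ℝ | 0 < p.2} :=
  ((contDiffOn_Pm hsm).continuousOn_fderiv_of_isOpen isOpenS (by norm_num)).clm_apply
    continuousOn_const

lemma contOn_fQm' : ContinuousOn (fun p => fderiv ℝ (Qm u) p (0, 1))
    {p : ℝ × ℝ | 0 < p.2} :=
  ((contDiffOn_Qm hsm).continuousOn_fderiv_of_isOpen isOpenS (by norm_num)).clm_apply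
    continuousOn_const

lemma contOn_ptt (t : ℝ) : ContinuousOn (fun y => ptt u t y) (Ioi 0) :=
  (contOn_comp2 (contOn_fPm hsm) t).congr fun y hy => ptt_eq hsm hy

lemma contOn_pty (t : ℝ) : ContinuousOn (fun y => pty u t y) (Ioi 0) :=
  (contOn_comp2 (contOn_fPm' hsm) t).congr fun y hy => pty_eq hsm hy

lemma contOn_pyy (t : ℝ) : ContinuousOn (fun y => pyy u t y) (Ioi 0) :=
  (contOn_comp2 (contOn_fQm' hsm) t).congr fun y hy => pyy_eq hsm hy

end cont

end Stmt8Aux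

open Stmt8Aux

/-- Weighted Hamiltonian identity:
`(cosh^{n-1} t · V(t))' = (n-1) cosh^{n-2} t sinh t ·
  [-(1/2)∫₀^∞ y^a ((∂_t u)² + (∂_y u)²) dy - (1/d_γ)(F(u(t,0)) - F(1))]`. -/
theorem stmt8 (n : ℕ) (hn : 2 ≤ n) (γ : ℝ) (hγ : γ ∈ Set.Ioo (0:ℝ) 1)
    (F : ℝ → ℝ) (hFs : ContDiff ℝ (⊤ : ℕ∞) F) (u : ℝ → ℝ → ℝ)
    (hsm : ContDiffOn ℝ 3 (fun p : ℝ × ℝ => u p.1 p.2) {p : ℝ × ℝ | 0 < p.2})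
    (heq : ∀ t y : ℝ, 0 < y → Ha n (1 - 2*γ) u t y = 0)
    (hcont : ContinuousOn (fun p : ℝ × ℝ => u p.1 p.2) {p : ℝ × ℝ | 0 ≤ p.2})
    (hptc : ContinuousOn (fun p : ℝ × ℝ => pt u p.1 p.2) {p : ℝ × ℝ | 0 ≤ p.2})
    (htr : Differentiable ℝ (fun t => u t 0))
    (hbc1 : ∀ t : ℝ, Tendsto (fun y : ℝ => y ^ (1 - 2*γ) * py u t y) (𝓝[>] (0:ℝ))
      (𝓝 ((1 / dgamma γ) * deriv F (u t 0))))
    (hbc2 : ∀ t : ℝ, Tendsto (fun y : ℝ => y ^ (1 - 2*γ) * py u t y * pt u t y)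
      atTop (𝓝 0))
    (hbc3 : ∀ t : ℝ, Tendsto (fun y : ℝ => y ^ (1 - 2*γ) * py u t y * pt u t y)
      (𝓝[>] (0:ℝ)) (𝓝 ((1 / dgamma γ) * deriv F (u t 0) * pt u t 0)))
    (hdom : ∀ c d : ℝ, ∃ g : ℝ → ℝ, IntegrableOn g (Set.Ioi 0) ∧
      ∀ t ∈ Set.Icc c d, ∀ y : ℝ, 0 < y →
        y ^ (1 - 2*γ) * (|pt u t y| ^ 2 + |py u t y| ^ 2 + |pt u t y| * |ptt u t y|
          + |py u t y| * |pty u t y|) ≤ g y) :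
    ∀ t : ℝ, HasDerivAt (fun s => Real.cosh s ^ (n - 1) * Vham (1 - 2*γ) (dgamma γ) F u s)
      (((n : ℝ) - 1) * Real.cosh t ^ (n - 2) * Real.sinh t *
        (-(1/2) * (∫ y in Set.Ioi (0:ℝ), y ^ (1 - 2*γ) * ((pt u t y) ^ 2 + (py u t y) ^ 2))
          - (1 / dgamma γ) * (F (u t 0) - F 1))) t := by
  intro t₀
  obtain ⟨g, hg_int, hg_bd⟩ := hdom (t₀ - 1) (t₀ + 1)
  have ht₀mem : t₀ ∈ Icc (t₀ - 1) (t₀ + 1) := by constructor <;> linarith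
  have hball : ∀ t ∈ Metric.ball t₀ 1, t ∈ Icc (t₀ - 1) (t₀ + 1) := by
    intro t ht
    have h := abs_lt.1 (by simpa [Real.dist_eq] using Metric.mem_ball.1 ht)
    exact ⟨by linarith [h.1], by linarith [h.2]⟩
  have hc_rpow : ContinuousOn (fun y : ℝ => y ^ (1 - 2*γ)) (Ioi 0) := fun y hy =>
    (Real.continuousAt_rpow_const y _ (Or.inl (ne_of_gt hy))).continuousWithinAt
  -- pointwise bounds
  have hbd4 : ∀ t ∈ Icc (t₀ - 1) (t₀ + 1), ∀ y : ℝ, 0 < y →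
      y ^ (1 - 2*γ) * (pt u t y) ^ 2 ≤ g y ∧ y ^ (1 - 2*γ) * (py u t y) ^ 2 ≤ g y ∧
      |y ^ (1 - 2*γ) * (2 * (pt u t y * ptt u t y) - 2 * (py u t y * pty u t y))| ≤ 2 * g y := by
    intro t ht y hy
    have hb := hg_bd t ht y hy
    have h0 : (0:ℝ) ≤ y ^ (1 - 2*γ) := Real.rpow_nonneg hy.le _
    have e1 : |pt u t y| ^ 2 = (pt u t y) ^ 2 := sq_abs _
    have e2 : |py u t y| ^ 2 = (py u t y) ^ 2 := sq_abs _
    have n1 : 0 ≤ y ^ (1 - 2*γ) * (|pt u t y| * |ptt u t y|) := by positivity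
    have n2 : 0 ≤ y ^ (1 - 2*γ) * (|py u t y| * |pty u t y|) := by positivity
    have n3 : 0 ≤ y ^ (1 - 2*γ) * |pt u t y| ^ 2 := by positivity
    have n4 : 0 ≤ y ^ (1 - 2*γ) * |py u t y| ^ 2 := by positivity
    refine ⟨by nlinarith, by nlinarith, ?_⟩
    rw [abs_mul, abs_of_nonneg h0]
    have h5 : |2 * (pt u t y * ptt u t y) - 2 * (py u t y * pty u t y)| ≤
        2 * (|pt u t y| * |ptt u t y|) + 2 * (|py u t y| * |pty u t y|) := by
      calc |2 * (pt u t y * ptt u t y) - 2 * (py u t y * pty u t y)|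
          ≤ |2 * (pt u t y * ptt u t y)| + |2 * (py u t y * pty u t y)| := abs_sub _ _
        _ = 2 * (|pt u t y| * |ptt u t y|) + 2 * (|py u t y| * |pty u t y|) := by
            rw [abs_mul, abs_mul, abs_mul, abs_mul]; norm_num
    calc y ^ (1 - 2*γ) * |2 * (pt u t y * ptt u t y) - 2 * (py u t y * pty u t y)|
        ≤ y ^ (1 - 2*γ) * (2 * (|pt u t y| * |ptt u t y|) + 2 * (|py u t y| * |pty u t y|)) :=
          mul_le_mul_of_nonneg_left h5 h0
      _ ≤ 2 * g y := by nlinarith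
  -- integrability of the square terms
  have hInt_pt2 : ∀ t ∈ Icc (t₀ - 1) (t₀ + 1),
      IntegrableOn (fun y => y ^ (1 - 2*γ) * (pt u t y) ^ 2) (Ioi 0) := by
    intro t ht
    refine Integrable.mono' hg_int
      ((hc_rpow.mul ((contOn_pt hsm t).pow 2)).aestronglyMeasurable measurableSet_Ioi) ?_
    rw [ae_restrict_iff' measurableSet_Ioi]
    refine Eventually.of_forall fun y hy => ?_
    have h1 := (hbd4 t ht y hy).1
    have h0 : (0:ℝ) ≤ y ^ (1 - 2*γ) * (pt u t y) ^ 2 := by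
      have := Real.rpow_nonneg (le_of_lt hy) (1 - 2*γ); positivity
    rwa [Real.norm_eq_abs, abs_of_nonneg h0]
  have hInt_py2 : ∀ t ∈ Icc (t₀ - 1) (t₀ + 1),
      IntegrableOn (fun y => y ^ (1 - 2*γ) * (py u t y) ^ 2) (Ioi 0) := by
    intro t ht
    refine Integrable.mono' hg_int
      ((hc_rpow.mul ((contOn_py hsm t).pow 2)).aestronglyMeasurable measurableSet_Ioi) ?_
    rw [ae_restrict_iff' measurableSet_Ioi]
    refine Eventually.of_forall fun y hy => ?_
    have h1 := (hbd4 t ht y hy).2.1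
    have h0 : (0:ℝ) ≤ y ^ (1 - 2*γ) * (py u t y) ^ 2 := by
      have := Real.rpow_nonneg (le_of_lt hy) (1 - 2*γ); positivity
    rwa [Real.norm_eq_abs, abs_of_nonneg h0]
  have hInt_e : ∀ t ∈ Icc (t₀ - 1) (t₀ + 1),
      IntegrableOn (fun y => y ^ (1 - 2*γ) * ((pt u t y) ^ 2 - (py u t y) ^ 2)) (Ioi 0) := by
    intro t ht
    have hfe : (fun y : ℝ => y ^ (1 - 2*γ) * ((pt u t y) ^ 2 - (py u t y) ^ 2)) =
        fun y => y ^ (1 - 2*γ) * (pt u t y) ^ 2 - y ^ (1 - 2*γ) * (py u t y) ^ 2 := by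
      funext y; ring
    rw [hfe]
    exact (hInt_pt2 t ht).sub (hInt_py2 t ht)
  -- differentiation under the integral sign
  have key := hasDerivAt_integral_of_dominated_loc_of_deriv_le
    (μ := volume.restrict (Ioi (0:ℝ))) (x₀ := t₀)
    (F := fun t y => y ^ (1 - 2*γ) * ((pt u t y) ^ 2 - (py u t y) ^ 2))
    (F' := fun t y => y ^ (1 - 2*γ) *
      (2 * (pt u t y * ptt u t y) - 2 * (py u t y * pty u t y)))
    (bound := fun y => 2 * g y) (Metric.ball_mem_nhds t₀ one_pos)
    (Eventually.of_forall fun t =>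
      (hc_rpow.mul (((contOn_pt hsm t).pow 2).sub
        ((contOn_py hsm t).pow 2))).aestronglyMeasurable measurableSet_Ioi)
    (hInt_e t₀ ht₀mem)
    ((hc_rpow.mul ((continuousOn_const.mul ((contOn_pt hsm t₀).mul (contOn_ptt hsm t₀))).sub
      (continuousOn_const.mul ((contOn_py hsm t₀).mul
        (contOn_pty hsm t₀))))).aestronglyMeasurable measurableSet_Ioi)
    (by
      rw [ae_restrict_iff' measurableSet_Ioi]
      refine Eventually.of_forall fun y hy t ht => ?_
      simpa only [Real.norm_eq_abs] using (hbd4 t (hball t ht) y hy).2.2)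
    (hg_int.const_mul 2)
    (by
      rw [ae_restrict_iff' measurableSet_Ioi]
      refine Eventually.of_forall fun y hy t _ => ?_
      have hd := (((ptt_hasDerivAt hsm (t := t) hy).pow 2).sub
        ((pyt_hasDerivAt hsm (t := t) hy).pow 2)).const_mul (y ^ (1 - 2*γ))
      have hd2 : HasDerivAt (fun s => y ^ (1 - 2*γ) * ((pt u s y) ^ 2 - (py u s y) ^ 2))
          (y ^ (1 - 2*γ) * (2 * (pt u t y * ptt u t y) - 2 * (py u t y * pty u t y))) t := by
        refine hd.congr_deriv ?_
        push_cast
        ring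
      exact hd2)
  obtain ⟨hInt_e', hA⟩ := key
  -- FTC on (0, ∞)
  set L : ℝ := 1 / dgamma γ * deriv F (u t₀ 0) * pt u t₀ 0 with hLdef
  set w : ℝ → ℝ := fun y => if y ≤ 0 then L else y ^ (1 - 2*γ) * py u t₀ y * pt u t₀ y
    with hwdef
  set W : ℝ → ℝ := fun y =>
    -(1/2) * (y ^ (1 - 2*γ) * (2 * (pt u t₀ y * ptt u t₀ y) - 2 * (py u t₀ y * pty u t₀ y)))
      - ((n:ℝ) - 1) * Real.tanh t₀ * (y ^ (1 - 2*γ) * (pt u t₀ y) ^ 2) with hWdef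
  have hWint : IntegrableOn W (Ioi 0) :=
    (hInt_e'.const_mul (-(1/2))).sub ((hInt_pt2 t₀ ht₀mem).const_mul _)
  have hw_deriv : ∀ y ∈ Ioi (0:ℝ), HasDerivAt w (W y) y := by
    intro y hy
    have hy0 : (0:ℝ) < y := hy
    have h1 : HasDerivAt (fun z : ℝ => z ^ (1 - 2*γ)) ((1 - 2*γ) * y ^ ((1 - 2*γ) - 1)) y :=
      Real.hasDerivAt_rpow_const (Or.inl hy0.ne')
    have hprod := ((h1.mul (pyy_hasDerivAt hsm (t := t₀) hy0)).mul (pty_hasDerivAt hsm (t := t₀) hy0))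
    have hε : w =ᶠ[𝓝 y] fun z => z ^ (1 - 2*γ) * py u t₀ z * pt u t₀ z := by
      filter_upwards [eventually_gt_nhds hy0] with z hz
      simp [hwdef, not_le.2 hz]
    refine HasDerivAt.congr_of_eventuallyEq ?_ hε
    refine hprod.congr_deriv ?_
    have hpde := heq t₀ y hy0
    unfold Ha at hpde
    have hsub : y ^ ((1 - 2*γ) - 1) = y ^ (1 - 2*γ) / y := Real.rpow_sub_one hy0.ne' _
    have hpyy : pyy u t₀ y = -(((1 - 2*γ)/y) * py u t₀ y) - ptt u t₀ y
        - ((n:ℝ) - 1) * Real.tanh t₀ * pt u t₀ y := by linarith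
    rw [hWdef]
    simp only [hsub, hpyy, Pi.mul_apply]
    field_simp
    ring
  have hw0 : w 0 = L := by simp [hwdef]
  have hcontw : ContinuousWithinAt w (Ici (0:ℝ)) 0 := by
    have h1 : Tendsto w (𝓝[>] (0:ℝ)) (𝓝 L) := by
      refine Tendsto.congr' ?_ (hbc3 t₀)
      filter_upwards [self_mem_nhdsWithin] with y hy
      simp [hwdef, not_le.2 (mem_Ioi.1 hy)]
    have h2 : Tendsto w (𝓝[Ici (0:ℝ)] 0) (𝓝 L) := by
      rw [← Set.Ioi_insert, nhdsWithin_insert, tendsto_sup]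
      exact ⟨by simpa [hw0] using tendsto_pure_nhds w 0, h1⟩
    simpa [ContinuousWithinAt, hw0] using h2
  have htop : Tendsto w atTop (𝓝 0) := by
    refine Tendsto.congr' ?_ (hbc2 t₀)
    filter_upwards [eventually_gt_atTop (0:ℝ)] with y hy
    simp [hwdef, not_le.2 hy]
  have hFTC : ∫ y in Ioi (0:ℝ), W y = 0 - w 0 :=
    integral_Ioi_of_hasDerivAt_of_tendsto hcontw hw_deriv hWint htop
  have hWsplit : ∫ y in Ioi (0:ℝ), W y =
      -(1/2) * (∫ y in Ioi (0:ℝ), y ^ (1 - 2*γ) *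
          (2 * (pt u t₀ y * ptt u t₀ y) - 2 * (py u t₀ y * pty u t₀ y)))
        - ((n:ℝ) - 1) * Real.tanh t₀ *
          (∫ y in Ioi (0:ℝ), y ^ (1 - 2*γ) * (pt u t₀ y) ^ 2) := by
    rw [hWdef]
    rw [integral_sub (hInt_e'.const_mul _) ((hInt_pt2 t₀ ht₀mem).const_mul _),
      integral_const_mul, integral_const_mul]
  have hXval : (∫ y in Ioi (0:ℝ), y ^ (1 - 2*γ) *
      (2 * (pt u t₀ y * ptt u t₀ y) - 2 * (py u t₀ y * pty u t₀ y))) =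
      2 * L - 2 * (((n:ℝ) - 1) * Real.tanh t₀ *
        (∫ y in Ioi (0:ℝ), y ^ (1 - 2*γ) * (pt u t₀ y) ^ 2)) := by
    rw [hWsplit, hw0] at hFTC
    linarith
  -- derivative of the boundary term
  have hF' : HasDerivAt F (deriv F (u t₀ 0)) (u t₀ 0) :=
    (hFs.differentiable (by simp) (u t₀ 0)).hasDerivAt
  have htr' : HasDerivAt (fun t => u t 0) (pt u t₀ 0) t₀ := (htr t₀).hasDerivAt
  have hFu : HasDerivAt (fun s => F (u s 0)) (deriv F (u t₀ 0) * pt u t₀ 0) t₀ :=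
    hF'.comp t₀ htr'
  -- derivative of V
  have hV : HasDerivAt (fun s => Vham (1 - 2*γ) (dgamma γ) F u s)
      ((1/2) * (∫ y in Ioi (0:ℝ), y ^ (1 - 2*γ) *
          (2 * (pt u t₀ y * ptt u t₀ y) - 2 * (py u t₀ y * pty u t₀ y)))
        - (1/dgamma γ) * (deriv F (u t₀ 0) * pt u t₀ 0)) t₀ := by
    have hA' : HasDerivAt (fun s => ∫ y in Ioi (0:ℝ), y ^ (1 - 2*γ) * ((pt u s y) ^ 2 - (py u s y) ^ 2))
        (∫ y in Ioi (0:ℝ), y ^ (1 - 2*γ) * (2 * (pt u t₀ y * ptt u t₀ y) - 2 * (py u t₀ y * pty u t₀ y))) t₀ := hA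
    have h := (hA'.const_mul (1/2)).sub ((hFu.sub_const (F 1)).const_mul (1/dgamma γ))
    simp only [Vham, one_div] at h ⊢
    exact h
  -- combine with the cosh factor
  have hcoshpow : HasDerivAt (fun s => Real.cosh s ^ (n - 1))
      (((n - 1 : ℕ) : ℝ) * Real.cosh t₀ ^ (n - 1 - 1) * Real.sinh t₀) t₀ :=
    (Real.hasDerivAt_cosh t₀).pow (n - 1)
  have hmul := hcoshpow.mul hV
  refine hmul.congr_deriv ?_
  have hch : Real.cosh t₀ ≠ 0 := (Real.cosh_pos t₀).ne'
  have hn1 : ((n - 1 : ℕ) : ℝ) = (n:ℝ) - 1 := by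
    rw [Nat.cast_sub (by omega : 1 ≤ n)]; norm_num
  have hn2 : n - 1 - 1 = n - 2 := by omega
  have hpow : Real.cosh t₀ ^ (n - 1) = Real.cosh t₀ ^ (n - 2) * Real.cosh t₀ := by
    rw [show n - 1 = (n - 2) + 1 by omega, pow_succ]
  have hadd_fun : (fun y : ℝ => y ^ (1 - 2*γ) * ((pt u t₀ y) ^ 2 + (py u t₀ y) ^ 2)) =
      fun y => y ^ (1 - 2*γ) * (pt u t₀ y) ^ 2 + y ^ (1 - 2*γ) * (py u t₀ y) ^ 2 := by
    funext y; ring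
  have hsub_fun : (fun y : ℝ => y ^ (1 - 2*γ) * ((pt u t₀ y) ^ 2 - (py u t₀ y) ^ 2)) =
      fun y => y ^ (1 - 2*γ) * (pt u t₀ y) ^ 2 - y ^ (1 - 2*γ) * (py u t₀ y) ^ 2 := by
    funext y; ring
  have hsplit_add : (∫ y in Ioi (0:ℝ), y ^ (1 - 2*γ) * ((pt u t₀ y) ^ 2 + (py u t₀ y) ^ 2)) =
      (∫ y in Ioi (0:ℝ), y ^ (1 - 2*γ) * (pt u t₀ y) ^ 2) +
      (∫ y in Ioi (0:ℝ), y ^ (1 - 2*γ) * (py u t₀ y) ^ 2) := by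
    rw [hadd_fun]
    exact integral_add (hInt_pt2 t₀ ht₀mem) (hInt_py2 t₀ ht₀mem)
  have hsplit_sub : (∫ y in Ioi (0:ℝ), y ^ (1 - 2*γ) * ((pt u t₀ y) ^ 2 - (py u t₀ y) ^ 2)) =
      (∫ y in Ioi (0:ℝ), y ^ (1 - 2*γ) * (pt u t₀ y) ^ 2) -
      (∫ y in Ioi (0:ℝ), y ^ (1 - 2*γ) * (py u t₀ y) ^ 2) := by
    rw [hsub_fun]
    exact integral_sub (hInt_pt2 t₀ ht₀mem) (hInt_py2 t₀ ht₀mem)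
  simp only [Vham]
  rw [hsplit_add, hsplit_sub, hXval, hn1, hn2, hpow, Real.tanh_eq_sinh_div_cosh, hLdef]
  field_simp
  ring
end

section
/- Let u : ℝ × (0,∞) → ℝ be three times continuously differentiable with H_a u = 0 on ℝ × (0,∞), extending continuously together with ∂_t u to ℝ × [0,∞), with t ↦ u(t,0) differentiable, and such that for every t ∈ ℝ: lim_{y→0⁺} y^a ∂_y u(t,y) = −(1/d_γ) f(u(t,0)), lim_{y→∞} y^a ∂_y u(t,y) ∂_t u(t,y) = 0, and lim_{y→0⁺} y^a ∂_y u(t,y) ∂_t u(t,y) = −(1/d_γ) f(u(t,0)) ∂_t u(t,0). Assume that for every compact interval I ⊂ ℝ there is an integrable function g : (0,∞) → ℝ such that y^a(|∂_t u|² + |∂_y u|² + |∂_t u||∂_{tt}u| + |∂_y u||∂_{ty}u|)(t,y) ≤ g(y) for all t ∈ I and y > 0. Assume moreover that ∫₀^∞ y^a ((∂_t u(t,y))² + (∂_y u(t,y))²) dy → 0 and u(t,0) → 1 as t → +∞. Define V(t) = (1/2) ∫₀^∞ y^a ((∂_t u(t,y))² − (∂_y u(t,y))²) dy − (1/d_γ)(F(u(t,0))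 − F(1)). Then V is nonincreasing on [0,∞) and V(t) → 0 as t → +∞. -/
open Real Filter MeasureTheory Set Topology

section Aux
variable {u : ℝ → ℝ → ℝ}

lemma isOpen_Omega : IsOpen {p : ℝ × ℝ | 0 < p.2} :=
  isOpen_lt continuous_const continuous_snd

variable (hsm : ContDiffOn ℝ 3 (fun p : ℝ × ℝ => u p.1 p.2) {p : ℝ × ℝ | 0 < p.2})

noncomputable def UU (u : ℝ → ℝ → ℝ) : ℝ × ℝ → ℝ := fun p => u p.1 p.2
noncomputable def GG (u : ℝ → ℝ → ℝ) : ℝ × ℝ → (ℝ × ℝ →L[ℝ] ℝ) := fderiv ℝ (UU u)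
noncomputable def G1 (u : ℝ → ℝ → ℝ) : ℝ × ℝ → ℝ := fun p => GG u p (1, 0)
noncomputable def G2 (u : ℝ → ℝ → ℝ) : ℝ × ℝ → ℝ := fun p => GG u p (0, 1)

include hsm

lemma contDiffOn_GG : ContDiffOn ℝ 2 (GG u) {p : ℝ × ℝ | 0 < p.2} :=
  hsm.fderiv_of_isOpen isOpen_Omega (by norm_num)

lemma contDiffOn_G1 : ContDiffOn ℝ 2 (G1 u) {p : ℝ × ℝ | 0 < p.2} :=
  (contDiffOn_GG hsm).clm_apply contDiffOn_const

lemma contDiffOn_G2 : ContDiffOn ℝ 2 (G2 u) {p : ℝ × ℝ | 0 < p.2} :=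
  (contDiffOn_GG hsm).clm_apply contDiffOn_const

lemma hasFDerivAt_UU {p : ℝ × ℝ} (hp : 0 < p.2) : HasFDerivAt (UU u) (GG u p) p := by
  have h1 : ContDiffAt ℝ 3 (UU u) p := hsm.contDiffAt (isOpen_Omega.mem_nhds hp)
  exact (h1.differentiableAt (by norm_num)).hasFDerivAt

lemma pt_eq {t y : ℝ} (hy : 0 < y) : pt u t y = G1 u (t, y) := by
  have hφ : HasDerivAt (fun s : ℝ => (s, y)) ((1 : ℝ), (0 : ℝ)) t :=
    (hasDerivAt_id t).prodMk (hasDerivAt_const t y)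
  have h2 : HasDerivAt (fun s => u s y) (G1 u (t, y)) t :=
    by have := (hasFDerivAt_UU hsm (p := (t, y)) hy).comp_hasDerivAt t hφ; exact this
  exact h2.deriv.symm ▸ rfl

lemma hasDerivAt_pt {t y : ℝ} (hy : 0 < y) :
    HasDerivAt (fun s => u s y) (pt u t y) t := by
  have hφ : HasDerivAt (fun s : ℝ => (s, y)) ((1 : ℝ), (0 : ℝ)) t :=
    (hasDerivAt_id t).prodMk (hasDerivAt_const t y)
  have h2 : HasDerivAt (fun s => u s y) (G1 u (t, y)) t :=
    by have := (hasFDerivAt_UU hsm (p := (t, y)) hy).comp_hasDerivAt t hφ; exact this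
  rwa [← pt_eq hsm hy] at h2

lemma py_eq {t y : ℝ} (hy : 0 < y) : py u t y = G2 u (t, y) := by
  have hφ : HasDerivAt (fun z : ℝ => (t, z)) ((0 : ℝ), (1 : ℝ)) y :=
    (hasDerivAt_const y t).prodMk (hasDerivAt_id y)
  have h2 : HasDerivAt (fun z => u t z) (G2 u (t, y)) y :=
    (hasFDerivAt_UU hsm (p := (t, y)) hy).comp_hasDerivAt y hφ
  exact h2.deriv.symm ▸ rfl

lemma hasDerivAt_py {t y : ℝ} (hy : 0 < y) :
    HasDerivAt (fun z => u t z) (py u t y) y := by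
  have hφ : HasDerivAt (fun z : ℝ => (t, z)) ((0 : ℝ), (1 : ℝ)) y :=
    (hasDerivAt_const y t).prodMk (hasDerivAt_id y)
  have h2 : HasDerivAt (fun z => u t z) (G2 u (t, y)) y :=
    (hasFDerivAt_UU hsm (p := (t, y)) hy).comp_hasDerivAt y hφ
  rwa [← py_eq hsm hy] at h2

lemma hasFDerivAt_G1 {p : ℝ × ℝ} (hp : 0 < p.2) :
    HasFDerivAt (G1 u) (fderiv ℝ (G1 u) p) p :=
  (((contDiffOn_G1 hsm).contDiffAt (isOpen_Omega.mem_nhds hp)).differentiableAt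
    (by norm_num)).hasFDerivAt

lemma hasFDerivAt_G2 {p : ℝ × ℝ} (hp : 0 < p.2) :
    HasFDerivAt (G2 u) (fderiv ℝ (G2 u) p) p :=
  (((contDiffOn_G2 hsm).contDiffAt (isOpen_Omega.mem_nhds hp)).differentiableAt
    (by norm_num)).hasFDerivAt

lemma ptt_eq {t y : ℝ} (hy : 0 < y) :
    ptt u t y = fderiv ℝ (G1 u) (t, y) (1, 0) := by
  have hφ : HasDerivAt (fun s : ℝ => (s, y)) ((1 : ℝ), (0 : ℝ)) t :=
    (hasDerivAt_id t).prodMk (hasDerivAt_const t y)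
  have h2 : HasDerivAt (fun s => G1 u (s, y)) (fderiv ℝ (G1 u) (t, y) (1, 0)) t :=
    by have := (hasFDerivAt_G1 hsm (p := (t, y)) hy).comp_hasDerivAt t hφ; exact this
  have h3 : HasDerivAt (fun s => pt u s y) (fderiv ℝ (G1 u) (t, y) (1, 0)) t := by
    refine h2.congr_of_eventuallyEq (Filter.Eventually.of_forall fun s => pt_eq hsm hy)
  exact h3.deriv.symm ▸ rfl

lemma hasDerivAt_ptt {t y : ℝ} (hy : 0 < y) :
    HasDerivAt (fun s => pt u s y) (ptt u t y) t := by
  have hφ : HasDerivAt (fun s : ℝ => (s, y)) ((1 : ℝ), (0 : ℝ)) t :=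
    (hasDerivAt_id t).prodMk (hasDerivAt_const t y)
  have h2 : HasDerivAt (fun s => G1 u (s, y)) (fderiv ℝ (G1 u) (t, y) (1, 0)) t :=
    by have := (hasFDerivAt_G1 hsm (p := (t, y)) hy).comp_hasDerivAt t hφ; exact this
  have h3 : HasDerivAt (fun s => pt u s y) (fderiv ℝ (G1 u) (t, y) (1, 0)) t :=
    h2.congr_of_eventuallyEq (Filter.Eventually.of_forall fun s => pt_eq hsm hy)
  rwa [← ptt_eq hsm hy] at h3

lemma pty_eq {t y : ℝ} (hy : 0 < y) :
    pty u t y = fderiv ℝ (G1 u) (t, y) (0, 1) := by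
  have hφ : HasDerivAt (fun z : ℝ => (t, z)) ((0 : ℝ), (1 : ℝ)) y :=
    (hasDerivAt_const y t).prodMk (hasDerivAt_id y)
  have h2 : HasDerivAt (fun z => G1 u (t, z)) (fderiv ℝ (G1 u) (t, y) (0, 1)) y :=
    (hasFDerivAt_G1 hsm (p := (t, y)) hy).comp_hasDerivAt y hφ
  have hev : (fun z => pt u t z) =ᶠ[nhds y] fun z => G1 u (t, z) := by
    filter_upwards [Ioi_mem_nhds hy] with z hz using pt_eq hsm hz
  have h3 : HasDerivAt (fun z => pt u t z) (fderiv ℝ (G1 u) (t, y) (0, 1)) y :=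
    h2.congr_of_eventuallyEq hev
  exact h3.deriv.symm ▸ rfl

lemma hasDerivAt_pty {t y : ℝ} (hy : 0 < y) :
    HasDerivAt (fun z => pt u t z) (pty u t y) y := by
  have hφ : HasDerivAt (fun z : ℝ => (t, z)) ((0 : ℝ), (1 : ℝ)) y :=
    (hasDerivAt_const y t).prodMk (hasDerivAt_id y)
  have h2 : HasDerivAt (fun z => G1 u (t, z)) (fderiv ℝ (G1 u) (t, y) (0, 1)) y :=
    (hasFDerivAt_G1 hsm (p := (t, y)) hy).comp_hasDerivAt y hφ
  have hev : (fun z => pt u t z) =ᶠ[nhds y] fun z => G1 u (t, z) := by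
    filter_upwards [Ioi_mem_nhds hy] with z hz using pt_eq hsm hz
  have h3 := h2.congr_of_eventuallyEq hev
  rwa [← pty_eq hsm hy] at h3

lemma pyy_eq {t y : ℝ} (hy : 0 < y) :
    pyy u t y = fderiv ℝ (G2 u) (t, y) (0, 1) := by
  have hφ : HasDerivAt (fun z : ℝ => (t, z)) ((0 : ℝ), (1 : ℝ)) y :=
    (hasDerivAt_const y t).prodMk (hasDerivAt_id y)
  have h2 : HasDerivAt (fun z => G2 u (t, z)) (fderiv ℝ (G2 u) (t, y) (0, 1)) y :=
    (hasFDerivAt_G2 hsm (p := (t, y)) hy).comp_hasDerivAt y hφ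
  have hev : (fun z => py u t z) =ᶠ[nhds y] fun z => G2 u (t, z) := by
    filter_upwards [Ioi_mem_nhds hy] with z hz using py_eq hsm hz
  have h3 : HasDerivAt (fun z => py u t z) (fderiv ℝ (G2 u) (t, y) (0, 1)) y :=
    h2.congr_of_eventuallyEq hev
  exact h3.deriv.symm ▸ rfl

lemma hasDerivAt_pyy {t y : ℝ} (hy : 0 < y) :
    HasDerivAt (fun z => py u t z) (pyy u t y) y := by
  have hφ : HasDerivAt (fun z : ℝ => (t, z)) ((0 : ℝ), (1 : ℝ)) y :=
    (hasDerivAt_const y t).prodMk (hasDerivAt_id y)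
  have h2 : HasDerivAt (fun z => G2 u (t, z)) (fderiv ℝ (G2 u) (t, y) (0, 1)) y :=
    (hasFDerivAt_G2 hsm (p := (t, y)) hy).comp_hasDerivAt y hφ
  have hev : (fun z => py u t z) =ᶠ[nhds y] fun z => G2 u (t, z) := by
    filter_upwards [Ioi_mem_nhds hy] with z hz using py_eq hsm hz
  have h3 := h2.congr_of_eventuallyEq hev
  rwa [← pyy_eq hsm hy] at h3

/-- Clairaut: the `t`-derivative of `py` is `pty` (for `y > 0`). -/
lemma hasDerivAt_pyt {t y : ℝ} (hy : 0 < y) :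
    HasDerivAt (fun s => py u s y) (pty u t y) t := by
  -- evaluation maps
  set e1 : (ℝ × ℝ →L[ℝ] ℝ) →L[ℝ] ℝ := ContinuousLinearMap.apply ℝ ℝ ((1 : ℝ), (0 : ℝ)) with he1
  set e2 : (ℝ × ℝ →L[ℝ] ℝ) →L[ℝ] ℝ := ContinuousLinearMap.apply ℝ ℝ ((0 : ℝ), (1 : ℝ)) with he2
  have hGdiff : HasFDerivAt (GG u) (fderiv ℝ (GG u) (t, y)) (t, y) :=
    (((contDiffOn_GG hsm).contDiffAt (isOpen_Omega.mem_nhds hy)).differentiableAt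
      (by norm_num)).hasFDerivAt
  have hG1 : HasFDerivAt (G1 u) ((e1.comp (fderiv ℝ (GG u) (t, y)))) (t, y) :=
    e1.hasFDerivAt.comp (t, y) hGdiff
  have hG2 : HasFDerivAt (G2 u) ((e2.comp (fderiv ℝ (GG u) (t, y)))) (t, y) :=
    e2.hasFDerivAt.comp (t, y) hGdiff
  have hsymm : ∀ v w : ℝ × ℝ, fderiv ℝ (GG u) (t, y) v w = fderiv ℝ (GG u) (t, y) w v := by
    intro v w
    refine second_derivative_symmetric_of_eventually (f := UU u) ?_ hGdiff v w
    filter_upwards [isOpen_Omega.mem_nhds hy] with q hq using hasFDerivAt_UU hsm hq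
  -- t-slice of G2
  have hφ : HasDerivAt (fun s : ℝ => (s, y)) ((1 : ℝ), (0 : ℝ)) t :=
    (hasDerivAt_id t).prodMk (hasDerivAt_const t y)
  have h2 : HasDerivAt (fun s => G2 u (s, y))
      ((e2.comp (fderiv ℝ (GG u) (t, y))) (1, 0)) t :=
    by have := hG2.comp_hasDerivAt t hφ; exact this
  have h3 : HasDerivAt (fun s => py u s y)
      ((e2.comp (fderiv ℝ (GG u) (t, y))) (1, 0)) t :=
    h2.congr_of_eventuallyEq (Filter.Eventually.of_forall fun s => py_eq hsm hy)
  have hval : (e2.comp (fderiv ℝ (GG u) (t, y))) (1, 0) = pty u t y := by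
    rw [pty_eq hsm hy, hG1.fderiv]
    simp only [ContinuousLinearMap.comp_apply, he1, he2, ContinuousLinearMap.apply_apply]
    exact hsymm (1, 0) (0, 1)
  rwa [hval] at h3

lemma contOn_pt : ContinuousOn (fun p : ℝ × ℝ => pt u p.1 p.2) {p : ℝ × ℝ | 0 < p.2} :=
  ((contDiffOn_G1 hsm).continuousOn).congr fun p hp => pt_eq hsm hp

lemma contOn_py : ContinuousOn (fun p : ℝ × ℝ => py u p.1 p.2) {p : ℝ × ℝ | 0 < p.2} :=
  ((contDiffOn_G2 hsm).continuousOn).congr fun p hp => py_eq hsm hp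

lemma contOn_ptt : ContinuousOn (fun p : ℝ × ℝ => ptt u p.1 p.2) {p : ℝ × ℝ | 0 < p.2} := by
  have h1 : ContinuousOn (fderiv ℝ (G1 u)) {p : ℝ × ℝ | 0 < p.2} :=
    (contDiffOn_G1 hsm).continuousOn_fderiv_of_isOpen isOpen_Omega (by norm_num)
  have h2 : ContinuousOn (fun p : ℝ × ℝ => fderiv ℝ (G1 u) p (1, 0)) {p : ℝ × ℝ | 0 < p.2} :=
    (ContinuousLinearMap.apply ℝ ℝ ((1 : ℝ), (0 : ℝ))).continuous.comp_continuousOn h1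
  exact h2.congr fun p hp => ptt_eq hsm hp

lemma contOn_pty : ContinuousOn (fun p : ℝ × ℝ => pty u p.1 p.2) {p : ℝ × ℝ | 0 < p.2} := by
  have h1 : ContinuousOn (fderiv ℝ (G1 u)) {p : ℝ × ℝ | 0 < p.2} :=
    (contDiffOn_G1 hsm).continuousOn_fderiv_of_isOpen isOpen_Omega (by norm_num)
  have h2 : ContinuousOn (fun p : ℝ × ℝ => fderiv ℝ (G1 u) p (0, 1)) {p : ℝ × ℝ | 0 < p.2} :=
    (ContinuousLinearMap.apply ℝ ℝ ((0 : ℝ), (1 : ℝ))).continuous.comp_continuousOn h1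
  exact h2.congr fun p hp => pty_eq hsm hp

omit hsm in
/-- FTC on `(0,∞)` with limits at both endpoints. -/
lemma integral_Ioi_zero_of_tendsto {h h' : ℝ → ℝ} {L0 Li : ℝ}
    (hderiv : ∀ x ∈ Ioi (0:ℝ), HasDerivAt h (h' x) x)
    (h'int : IntegrableOn h' (Ioi (0:ℝ)))
    (h0 : Tendsto h (𝓝[>] (0:ℝ)) (𝓝 L0))
    (hinf : Tendsto h atTop (𝓝 Li)) :
    ∫ x in Ioi (0:ℝ), h' x = Li - L0 := by
  have key : ∀ ε : ℝ, 0 < ε → ∫ x in Ioi ε, h' x = Li - h ε := by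
    intro ε hε
    refine integral_Ioi_of_hasDerivAt_of_tendsto
      (hderiv ε hε).continuousAt.continuousWithinAt
      (fun x hx => hderiv x (hε.trans hx))
      (h'int.mono_set (Ioi_subset_Ioi hε.le)) hinf
  set s : ℕ → Set ℝ := fun k => Ioi (((k : ℝ) + 1)⁻¹) with hs
  have hpos : ∀ k : ℕ, (0:ℝ) < ((k : ℝ) + 1)⁻¹ := fun k => by positivity
  have hmono : Monotone s := by
    intro k l hkl
    apply Ioi_subset_Ioi
    gcongr
  have hun : ⋃ k, s k = Ioi (0:ℝ) := by
    ext x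
    simp only [hs, mem_iUnion, mem_Ioi]
    constructor
    · rintro ⟨k, hk⟩; exact (hpos k).trans hk
    · intro hx
      obtain ⟨k, hk⟩ := exists_nat_gt x⁻¹
      refine ⟨k, ?_⟩
      have h1 : x⁻¹ < (k : ℝ) + 1 := hk.trans (lt_add_one _)
      have h2 := inv_strictAnti₀ (show (0:ℝ) < x⁻¹ by positivity) h1
      rwa [inv_inv] at h2
  have A : Tendsto (fun k : ℕ => ∫ x in s k, h' x) atTop (𝓝 (∫ x in Ioi (0:ℝ), h' x)) := by
    have := tendsto_setIntegral_of_monotone (fun k => measurableSet_Ioi) hmono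
      (by rw [hun]; exact h'int)
    rwa [hun] at this
  have heps : Tendsto (fun k : ℕ => ((k : ℝ) + 1)⁻¹) atTop (𝓝[>] (0:ℝ)) := by
    apply tendsto_nhdsWithin_of_tendsto_nhds_of_eventually_within
    · have : Tendsto (fun k : ℕ => (k : ℝ) + 1) atTop atTop :=
        tendsto_natCast_atTop_atTop.atTop_add tendsto_const_nhds
      exact this.inv_tendsto_atTop
    · exact Eventually.of_forall fun k => hpos k
  have B : Tendsto (fun k : ℕ => ∫ x in s k, h' x) atTop (𝓝 (Li - L0)) := by
    have hB : Tendsto (fun k : ℕ => Li - h (((k : ℝ) + 1)⁻¹)) atTop (𝓝 (Li - L0)) :=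
      (tendsto_const_nhds : Tendsto (fun _ : ℕ => Li) atTop (𝓝 Li)).sub (h0.comp heps)
    refine Tendsto.congr (fun k => ?_) hB
    exact (key _ (hpos k)).symm
  exact tendsto_nhds_unique A B

end Aux

/-- The Hamiltonian energy `V` is nonincreasing on `[0,∞)` and decreases to zero as
`t → +∞`, under the additional assumptions that the weighted Dirichlet integral tends to
`0` and `u(t,0) → 1` as `t → +∞`. -/
theorem stmt9 (n : ℕ) (hn : 2 ≤ n) (γ : ℝ) (hγ : γ ∈ Set.Ioo (0:ℝ) 1)
    (F : ℝ → ℝ) (hFs : ContDiff ℝ (⊤ : ℕ∞) F) (u : ℝ → ℝ → ℝ)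
    (hsm : ContDiffOn ℝ 3 (fun p : ℝ × ℝ => u p.1 p.2) {p : ℝ × ℝ | 0 < p.2})
    (heq : ∀ t y : ℝ, 0 < y → Ha n (1 - 2*γ) u t y = 0)
    (hcont : ContinuousOn (fun p : ℝ × ℝ => u p.1 p.2) {p : ℝ × ℝ | 0 ≤ p.2})
    (hptc : ContinuousOn (fun p : ℝ × ℝ => pt u p.1 p.2) {p : ℝ × ℝ | 0 ≤ p.2})
    (htr : Differentiable ℝ (fun t => u t 0))
    (hbc1 : ∀ t : ℝ, Tendsto (fun y : ℝ => y ^ (1 - 2*γ) * py u t y) (𝓝[>] (0:ℝ))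
      (𝓝 ((1 / dgamma γ) * deriv F (u t 0))))
    (hbc2 : ∀ t : ℝ, Tendsto (fun y : ℝ => y ^ (1 - 2*γ) * py u t y * pt u t y)
      atTop (𝓝 0))
    (hbc3 : ∀ t : ℝ, Tendsto (fun y : ℝ => y ^ (1 - 2*γ) * py u t y * pt u t y)
      (𝓝[>] (0:ℝ)) (𝓝 ((1 / dgamma γ) * deriv F (u t 0) * pt u t 0)))
    (hdom : ∀ c d : ℝ, ∃ g : ℝ → ℝ, IntegrableOn g (Set.Ioi 0) ∧
      ∀ t ∈ Set.Icc c d, ∀ y : ℝ, 0 < y →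
        y ^ (1 - 2*γ) * (|pt u t y| ^ 2 + |py u t y| ^ 2 + |pt u t y| * |ptt u t y|
          + |py u t y| * |pty u t y|) ≤ g y)
    (hdir : Tendsto (fun t => ∫ y in Set.Ioi (0:ℝ),
      y ^ (1 - 2*γ) * ((pt u t y) ^ 2 + (py u t y) ^ 2)) atTop (𝓝 0))
    (hone : Tendsto (fun t => u t 0) atTop (𝓝 1)) :
    AntitoneOn (Vham (1 - 2*γ) (dgamma γ) F u) (Set.Ici 0) ∧
      Tendsto (Vham (1 - 2*γ) (dgamma γ) F u) atTop (𝓝 0) := by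
  set a : ℝ := 1 - 2*γ with ha
  set κ : ℝ → ℝ := fun t => ((n : ℝ) - 1) * Real.tanh t with hκdef
  set E : ℝ → ℝ := fun t => ∫ y in Set.Ioi (0:ℝ), y ^ a * (pt u t y) ^ 2 with hEdef
  -- slice continuity
  have hsl : ∀ (f : ℝ × ℝ → ℝ), ContinuousOn f {p : ℝ × ℝ | 0 < p.2} →
      ∀ t : ℝ, ContinuousOn (fun y => f (t, y)) (Set.Ioi 0) := by
    intro f hf t
    exact hf.comp ((continuous_const.prodMk continuous_id).continuousOn)
      (fun y hy => by exact hy)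
  have hcpt : ∀ t : ℝ, ContinuousOn (fun y => pt u t y) (Set.Ioi 0) :=
    hsl _ (contOn_pt hsm)
  have hcpy : ∀ t : ℝ, ContinuousOn (fun y => py u t y) (Set.Ioi 0) :=
    hsl _ (contOn_py hsm)
  have hcptt : ∀ t : ℝ, ContinuousOn (fun y => ptt u t y) (Set.Ioi 0) :=
    hsl _ (contOn_ptt hsm)
  have hcpty : ∀ t : ℝ, ContinuousOn (fun y => pty u t y) (Set.Ioi 0) :=
    hsl _ (contOn_pty hsm)
  have hcrpow : ContinuousOn (fun y : ℝ => y ^ a) (Set.Ioi 0) := fun y hy =>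
    (Real.continuousAt_rpow_const y a (Or.inl (ne_of_gt hy))).continuousWithinAt
  have hrpow_nonneg : ∀ y : ℝ, 0 < y → (0:ℝ) ≤ y ^ a := fun y hy => Real.rpow_nonneg hy.le a
  -- the key derivative computation
  have hVderiv : ∀ t₀ : ℝ, HasDerivAt (Vham a (dgamma γ) F u) (-(κ t₀) * E t₀) t₀ := by
    intro t₀
    obtain ⟨g, hgint, hgbd⟩ := hdom (t₀ - 1) (t₀ + 1)
    set Fn : ℝ → ℝ → ℝ := fun x y => y ^ a * ((pt u x y) ^ 2 - (py u x y) ^ 2) with hFn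
    set Fn' : ℝ → ℝ → ℝ :=
      fun x y => y ^ a * (2 * pt u x y * ptt u x y - 2 * py u x y * pty u x y) with hFn'
    have hFn_meas : ∀ x : ℝ, AEStronglyMeasurable (Fn x) (volume.restrict (Set.Ioi 0)) := by
      intro x
      exact ((hcrpow.mul (((hcpt x).pow 2).sub ((hcpy x).pow 2))).aestronglyMeasurable
        measurableSet_Ioi)
    have hFn'_meas : ∀ x : ℝ, AEStronglyMeasurable (Fn' x) (volume.restrict (Set.Ioi 0)) := by
      intro x
      exact ((hcrpow.mul ((((continuousOn_const.mul (hcpt x)).mul (hcptt x))).sub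
        ((continuousOn_const.mul (hcpy x)).mul (hcpty x)))).aestronglyMeasurable
        measurableSet_Ioi)
    have habs : ∀ x ∈ Set.Icc (t₀ - 1) (t₀ + 1), ∀ y : ℝ, 0 < y → ‖Fn x y‖ ≤ g y := by
      intro x hx y hy
      have hb := hgbd x hx y hy
      refine le_trans ?_ hb
      rw [Real.norm_eq_abs, abs_mul, abs_of_nonneg (hrpow_nonneg y hy)]
      have h1 : |(pt u x y) ^ 2 - (py u x y) ^ 2| ≤ |pt u x y| ^ 2 + |py u x y| ^ 2 := by
        have := abs_sub ((pt u x y) ^ 2) ((py u x y) ^ 2)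
        rwa [abs_pow, abs_pow] at this
      have h2 : (0:ℝ) ≤ |pt u x y| * |ptt u x y| := by positivity
      have h3 : (0:ℝ) ≤ |py u x y| * |pty u x y| := by positivity
      have := hrpow_nonneg y hy
      nlinarith
    have habs' : ∀ x ∈ Set.Icc (t₀ - 1) (t₀ + 1), ∀ y : ℝ, 0 < y → ‖Fn' x y‖ ≤ 2 * g y := by
      intro x hx y hy
      have hb := hgbd x hx y hy
      rw [Real.norm_eq_abs, abs_mul, abs_of_nonneg (hrpow_nonneg y hy)]
      have h1 : |2 * pt u x y * ptt u x y - 2 * py u x y * pty u x y| ≤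
          2 * (|pt u x y| * |ptt u x y|) + 2 * (|py u x y| * |pty u x y|) := by
        have := abs_sub (2 * pt u x y * ptt u x y) (2 * py u x y * pty u x y)
        rw [abs_mul, abs_mul, abs_mul, abs_mul] at this
        simp only [abs_two] at this
        linarith [this]
      have h2 : (0:ℝ) ≤ |pt u x y| ^ 2 := by positivity
      have h3 : (0:ℝ) ≤ |py u x y| ^ 2 := by positivity
      have := hrpow_nonneg y hy
      nlinarith
    have hFn_int : Integrable (Fn t₀) (volume.restrict (Set.Ioi 0)) := by
      refine Integrable.mono' hgint (hFn_meas t₀) ?_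
      filter_upwards [self_mem_ae_restrict measurableSet_Ioi] with y hy
      exact habs t₀ (by constructor <;> linarith) y hy
    have h_bound : ∀ᵐ y ∂(volume.restrict (Set.Ioi 0)), ∀ x ∈ Metric.ball t₀ 1,
        ‖Fn' x y‖ ≤ 2 * g y := by
      filter_upwards [self_mem_ae_restrict measurableSet_Ioi] with y hy x hx
      have hx' : x ∈ Set.Icc (t₀ - 1) (t₀ + 1) := by
        have := Metric.mem_ball.mp hx
        rw [Real.dist_eq] at this
        constructor <;> [linarith [abs_lt.mp this |>.1]; linarith [abs_lt.mp this |>.2]]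
      exact habs' x hx' y hy
    have h_diff : ∀ᵐ y ∂(volume.restrict (Set.Ioi 0)), ∀ x ∈ Metric.ball t₀ 1,
        HasDerivAt (fun x => Fn x y) (Fn' x y) x := by
      filter_upwards [self_mem_ae_restrict measurableSet_Ioi] with y hy x _
      have h1 : HasDerivAt (fun s => pt u s y) (ptt u x y) x := hasDerivAt_ptt hsm hy
      have h2 : HasDerivAt (fun s => py u s y) (pty u x y) x := hasDerivAt_pyt hsm hy
      have h3 := ((h1.pow 2).sub (h2.pow 2)).const_mul (y ^ a)
      refine h3.congr_deriv ?_
      simp only [hFn']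
      ring
    obtain ⟨hFn'_int, hIderiv⟩ := hasDerivAt_integral_of_dominated_loc_of_deriv_le
      (Metric.ball_mem_nhds t₀ zero_lt_one) (Filter.Eventually.of_forall hFn_meas) hFn_int (hFn'_meas t₀)
      h_bound (hgint.const_mul 2) h_diff
    -- integration by parts
    set h : ℝ → ℝ := fun y => y ^ a * py u t₀ y * pt u t₀ y with hhdef
    set h' : ℝ → ℝ := fun y => -(y ^ a * pt u t₀ y * ptt u t₀ y)
      - κ t₀ * (y ^ a * (pt u t₀ y) ^ 2) + y ^ a * py u t₀ y * pty u t₀ y with hh'def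
    have hd : ∀ y ∈ Set.Ioi (0:ℝ), HasDerivAt h (h' y) y := by
      intro y hy
      have hy' : (0:ℝ) < y := hy
      have hrp : HasDerivAt (fun z : ℝ => z ^ a) (a * y ^ (a - 1)) y :=
        Real.hasDerivAt_rpow_const (Or.inl (ne_of_gt hy'))
      have hpyd : HasDerivAt (fun z => py u t₀ z) (pyy u t₀ y) y := hasDerivAt_pyy hsm hy'
      have hptd : HasDerivAt (fun z => pt u t₀ z) (pty u t₀ y) y := hasDerivAt_pty hsm hy'
      have full := (hrp.mul hpyd).mul hptd
      have hpde := heq t₀ y hy'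
      simp only [Ha] at hpde
      have hY : y ^ (a - 1) = y ^ a / y := by
        rw [Real.rpow_sub hy', Real.rpow_one]
      refine full.congr_deriv ?_
      simp only [hh'def, hκdef, hY, Pi.mul_apply]
      linear_combination (y ^ a * pt u t₀ y) * hpde
    have hptsq_int : Integrable (fun y => y ^ a * (pt u t₀ y) ^ 2)
        (volume.restrict (Set.Ioi 0)) := by
      refine Integrable.mono' hgint ((hcrpow.mul ((hcpt t₀).pow 2)).aestronglyMeasurable
        measurableSet_Ioi) ?_
      filter_upwards [self_mem_ae_restrict measurableSet_Ioi] with y hy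
      have hb := hgbd t₀ (by constructor <;> linarith) y hy
      have h5 := hrpow_nonneg y hy
      rw [Real.norm_eq_abs, abs_of_nonneg (by positivity)]
      have h2 : (0:ℝ) ≤ |pt u t₀ y| * |ptt u t₀ y| := by positivity
      have h3 : (0:ℝ) ≤ |py u t₀ y| * |pty u t₀ y| := by positivity
      have h4 : (0:ℝ) ≤ |py u t₀ y| ^ 2 := by positivity
      nlinarith [sq_abs (pt u t₀ y)]
    have hh'_int : IntegrableOn h' (Set.Ioi 0) := by
      refine Integrable.mono' (hgint.const_mul (1 + |κ t₀|))
        ?_ ?_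
      · refine (((hcrpow.mul (hcpt t₀)).mul (hcptt t₀)).neg.sub
          (continuousOn_const.mul (hcrpow.mul ((hcpt t₀).pow 2)))).add
          ((hcrpow.mul (hcpy t₀)).mul (hcpty t₀)) |>.aestronglyMeasurable measurableSet_Ioi
      · filter_upwards [self_mem_ae_restrict measurableSet_Ioi] with y hy
        have hb := hgbd t₀ (by constructor <;> linarith) y hy
        have hY := hrpow_nonneg y hy
        simp only [hh'def, Real.norm_eq_abs]
        have i0 : ∀ A B C : ℝ, |(-A - B + C)| ≤ |A| + |B| + |C| := by
          intro A B C
          calc |(-A - B + C)| ≤ |(-A - B)| + |C| := abs_add_le _ _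
            _ ≤ |(-A)| + |B| + |C| := by linarith [abs_sub (-A) B]
            _ = |A| + |B| + |C| := by rw [abs_neg]
        have i1 := i0 (y ^ a * pt u t₀ y * ptt u t₀ y) (κ t₀ * (y ^ a * (pt u t₀ y) ^ 2))
          (y ^ a * py u t₀ y * pty u t₀ y)
        have b1 : |y ^ a * pt u t₀ y * ptt u t₀ y| = y ^ a * (|pt u t₀ y| * |ptt u t₀ y|) := by
          rw [abs_mul (y ^ a * pt u t₀ y), abs_mul (y ^ a), abs_of_nonneg hY]; ring
        have b2 : |κ t₀ * (y ^ a * pt u t₀ y ^ 2)| = |κ t₀| * (y ^ a * pt u t₀ y ^ 2) := by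
          rw [abs_mul, abs_of_nonneg (by positivity : (0:ℝ) ≤ y ^ a * pt u t₀ y ^ 2)]
        have b3 : |y ^ a * py u t₀ y * pty u t₀ y| = y ^ a * (|py u t₀ y| * |pty u t₀ y|) := by
          rw [abs_mul (y ^ a * py u t₀ y), abs_mul (y ^ a), abs_of_nonneg hY]; ring
        have n1 : (0:ℝ) ≤ y ^ a * |pt u t₀ y| ^ 2 := by positivity
        have n2 : (0:ℝ) ≤ y ^ a * |py u t₀ y| ^ 2 := by positivity
        have s1 : y ^ a * (|pt u t₀ y| * |ptt u t₀ y|) + y ^ a * (|py u t₀ y| * |pty u t₀ y|)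
            ≤ g y := by nlinarith
        have s2 : y ^ a * pt u t₀ y ^ 2 ≤ g y := by
          nlinarith [mul_nonneg hY
            (mul_nonneg (abs_nonneg (pt u t₀ y)) (abs_nonneg (ptt u t₀ y))),
            mul_nonneg hY (mul_nonneg (abs_nonneg (py u t₀ y)) (abs_nonneg (pty u t₀ y))),
            sq_abs (pt u t₀ y), n2]
        have s3 : |κ t₀| * (y ^ a * pt u t₀ y ^ 2) ≤ |κ t₀| * g y :=
          mul_le_mul_of_nonneg_left s2 (abs_nonneg _)
        have final : |-(y ^ a * pt u t₀ y * ptt u t₀ y) - κ t₀ * (y ^ a * pt u t₀ y ^ 2)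
            + y ^ a * py u t₀ y * pty u t₀ y| ≤ (1 + |κ t₀|) * g y := by
          have expand : (1 + |κ t₀|) * g y = g y + |κ t₀| * g y := by ring
          rw [expand]
          linarith [i1, b1, b2, b3, s1, s3]
        exact final
    have hIBP : ∫ y in Set.Ioi (0:ℝ), h' y =
        0 - (1 / dgamma γ) * deriv F (u t₀ 0) * pt u t₀ 0 :=
      integral_Ioi_zero_of_tendsto hd hh'_int (hbc3 t₀) (hbc2 t₀)
    have hsplit : ∫ y in Set.Ioi (0:ℝ), Fn' t₀ y =
        -2 * (∫ y in Set.Ioi (0:ℝ), h' y) - 2 * κ t₀ * E t₀ := by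
      have e : ∀ y : ℝ, Fn' t₀ y = (-2) * h' y + (-(2 * κ t₀)) * (y ^ a * (pt u t₀ y) ^ 2) := by
        intro y; simp only [hFn', hh'def]; ring
      rw [integral_congr_ae (Filter.Eventually.of_forall e)]
      rw [integral_add ((hh'_int.const_mul _)) ((hptsq_int.const_mul _)),
        integral_const_mul, integral_const_mul]
      simp only [hEdef]
      ring
    have hIval : ∫ y in Set.Ioi (0:ℝ), Fn' t₀ y =
        2 * ((1 / dgamma γ) * deriv F (u t₀ 0) * pt u t₀ 0) - 2 * κ t₀ * E t₀ := by
      rw [hsplit, hIBP]; ring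
    -- assemble
    have hFc : HasDerivAt (fun t => F (u t 0)) (deriv F (u t₀ 0) * pt u t₀ 0) t₀ := by
      have hF1 : HasDerivAt F (deriv F (u t₀ 0)) (u t₀ 0) :=
        ((hFs.differentiable (by simp)) (u t₀ 0)).hasDerivAt
      have hu0 : HasDerivAt (fun t => u t 0) (deriv (fun t => u t 0) t₀) t₀ :=
        (htr t₀).hasDerivAt
      have := hF1.comp t₀ hu0
      exact this
    have hIderiv' : HasDerivAt (fun t => ∫ y in Set.Ioi (0:ℝ), Fn t y)
        (∫ y in Set.Ioi (0:ℝ), Fn' t₀ y) t₀ := hIderiv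
    have final := (hIderiv'.const_mul (1/2 : ℝ)).sub
      ((hFc.sub_const (F 1)).const_mul (1 / dgamma γ))
    have : HasDerivAt (Vham a (dgamma γ) F u)
        ((1/2 : ℝ) * (∫ y in Set.Ioi (0:ℝ), Fn' t₀ y)
          - (1 / dgamma γ) * (deriv F (u t₀ 0) * pt u t₀ 0)) t₀ := final
    rw [hIval] at this
    convert this using 1
    ring
  have hVdiff : Differentiable ℝ (Vham a (dgamma γ) F u) :=
    fun t => (hVderiv t).differentiableAt
  constructor
  · refine antitoneOn_of_deriv_nonpos (convex_Ici 0)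
      (hVdiff.continuous.continuousOn) (hVdiff.differentiableOn) ?_
    intro x hx
    rw [interior_Ici] at hx
    rw [(hVderiv x).deriv]
    have hE : 0 ≤ E x := setIntegral_nonneg measurableSet_Ioi
      (fun y hy => mul_nonneg (hrpow_nonneg y hy) (sq_nonneg _))
    have hκ : 0 ≤ κ x := by
      have hn' : (2:ℝ) ≤ (n:ℝ) := by exact_mod_cast hn
      refine mul_nonneg (by linarith) ?_
      rw [Real.tanh_eq_sinh_div_cosh]
      exact div_nonneg (Real.sinh_nonneg_iff.mpr (le_of_lt hx)) (Real.cosh_pos x).le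
    nlinarith
  · -- limit at infinity
    have hIbnd : ∀ t : ℝ, ‖∫ y in Set.Ioi (0:ℝ), y ^ a * ((pt u t y) ^ 2 - (py u t y) ^ 2)‖ ≤
        ∫ y in Set.Ioi (0:ℝ), y ^ a * ((pt u t y) ^ 2 + (py u t y) ^ 2) := by
      intro t
      obtain ⟨g, hgint, hgbd⟩ := hdom t t
      have hmaj_int : Integrable (fun y => y ^ a * ((pt u t y) ^ 2 + (py u t y) ^ 2))
          (volume.restrict (Set.Ioi 0)) := by
        refine Integrable.mono' hgint ((hcrpow.mul (((hcpt t).pow 2).add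
          ((hcpy t).pow 2))).aestronglyMeasurable measurableSet_Ioi) ?_
        filter_upwards [self_mem_ae_restrict measurableSet_Ioi] with y hy
        have hb := hgbd t (by constructor <;> linarith) y hy
        rw [Real.norm_eq_abs, abs_mul, abs_of_nonneg (hrpow_nonneg y hy)]
        have h5 := hrpow_nonneg y hy
        have e : |(pt u t y) ^ 2 + (py u t y) ^ 2| = |pt u t y| ^ 2 + |py u t y| ^ 2 := by
          rw [abs_of_nonneg (by positivity)]
          rw [sq_abs, sq_abs]
        rw [e]
        nlinarith [mul_nonneg h5 (mul_nonneg (abs_nonneg (pt u t y)) (abs_nonneg (ptt u t y))),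
          mul_nonneg h5 (mul_nonneg (abs_nonneg (py u t y)) (abs_nonneg (pty u t y)))]
      refine norm_integral_le_of_norm_le hmaj_int ?_
      filter_upwards [self_mem_ae_restrict measurableSet_Ioi] with y hy
      rw [Real.norm_eq_abs, abs_mul, abs_of_nonneg (hrpow_nonneg y hy)]
      have h5 := hrpow_nonneg y hy
      have h1 : |(pt u t y) ^ 2 - (py u t y) ^ 2| ≤ (pt u t y) ^ 2 + (py u t y) ^ 2 := by
        have := abs_sub ((pt u t y) ^ 2) ((py u t y) ^ 2)
        rwa [abs_of_nonneg (sq_nonneg (pt u t y)), abs_of_nonneg (sq_nonneg (py u t y))] at this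
      nlinarith [mul_nonneg h5 (abs_nonneg ((pt u t y) ^ 2 - (py u t y) ^ 2))]
    have hI0 : Tendsto (fun t => ∫ y in Set.Ioi (0:ℝ),
        y ^ a * ((pt u t y) ^ 2 - (py u t y) ^ 2)) atTop (𝓝 0) :=
      squeeze_zero_norm hIbnd hdir
    have hF0 : Tendsto (fun t => F (u t 0) - F 1) atTop (𝓝 0) := by
      have h1 : Tendsto (fun t => F (u t 0)) atTop (𝓝 (F 1)) :=
        (hFs.continuous.tendsto 1).comp hone
      have := h1.sub_const (F 1)
      rwa [sub_self] at this
    have := (hI0.const_mul (1/2 : ℝ)).sub (hF0.const_mul (1 / dgamma γ))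
    simp only [mul_zero, sub_zero] at this
    exact this
end

section
/- Let n ≥ 2 be an integer, F : ℝ → ℝ smooth, f = −F′, and let w : ℝ → ℝ be a bounded C² function satisfying −w″(t) − (n−1) tanh(t) w′(t) = f(w(t)) for all t ∈ ℝ. Assume that w(t) → L⁺ and w′(t) → 0 as t → +∞, and that for every t ∈ ℝ the function s ↦ tanh(s)(w′(s))² is integrable on (t,∞). Then for every t ∈ ℝ, (1/2)(w′(t))² − (n−1) ∫_t^∞ tanh(s)(w′(s))² ds = F(w(t)) − F(L⁺). -/
open Real Filter MeasureTheory Set Topology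

/-- Hamiltonian-type identity for the one-dimensional equation
`-w'' - (n-1) tanh t · w' = f(w)` with `f = -F'`: for every `t`,
`(1/2)(w'(t))² - (n-1)∫_t^∞ tanh s (w'(s))² ds = F(w(t)) - F(L⁺)`. -/
theorem stmt10 (n : ℕ) (hn : 2 ≤ n) (F : ℝ → ℝ) (hFs : ContDiff ℝ (⊤ : ℕ∞) F)
    (w : ℝ → ℝ) (hw : ContDiff ℝ 2 w) (hb : ∃ M : ℝ, ∀ t : ℝ, |w t| ≤ M)
    (heq : ∀ t : ℝ, -(deriv (deriv w) t) - ((n : ℝ) - 1) * Real.tanh t * deriv w t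
      = -(deriv F (w t)))
    (Lp : ℝ) (hlim : Tendsto w atTop (𝓝 Lp)) (hlim' : Tendsto (deriv w) atTop (𝓝 0))
    (hint : ∀ t : ℝ, IntegrableOn (fun s => Real.tanh s * (deriv w s) ^ 2) (Set.Ioi t)) :
    ∀ t : ℝ, (1/2) * (deriv w t) ^ 2
        - ((n : ℝ) - 1) * (∫ s in Set.Ioi t, Real.tanh s * (deriv w s) ^ 2)
      = F (w t) - F Lp := by
  intro t
  set G : ℝ → ℝ := fun s => F (w s) - (1/2) * (deriv w s) ^ 2 with hG
  have hw1 : ∀ x, HasDerivAt w (deriv w x) x := fun x =>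
    ((hw.differentiable (by norm_num)) x).hasDerivAt
  have hwd : ContDiff ℝ 1 (deriv w) := by
    have h2 : ContDiff ℝ ((1:ℕ∞)+1) w := by exact_mod_cast hw
    exact (contDiff_succ_iff_deriv.mp h2).2.2
  have hw2 : ∀ x, HasDerivAt (deriv w) (deriv (deriv w) x) x := fun x =>
    ((hwd.differentiable one_ne_zero) x).hasDerivAt
  have hFd : ∀ y, HasDerivAt F (deriv F y) y := fun y =>
    ((hFs.differentiable (by simp)) y).hasDerivAt
  have hGd : ∀ x, HasDerivAt G (((n:ℝ)-1) * Real.tanh x * (deriv w x)^2) x := by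
    intro x
    have h1 : HasDerivAt (fun s => F (w s)) (deriv F (w x) * deriv w x) x :=
      (hFd (w x)).comp x (hw1 x)
    have h2 := ((hw2 x).pow 2).const_mul (1/2)
    have h3 := h1.sub h2
    rw [hG]
    convert h3 using 1
    · rfl
    · rfl
    · rfl
    have heqx := heq x
    push_cast
    linear_combination (-(deriv w x)) * heqx
  have hlimG : Tendsto G atTop (𝓝 (F Lp)) := by
    have h1 : Tendsto (fun s => F (w s)) atTop (𝓝 (F Lp)) :=
      ((hFs.continuous).continuousAt.tendsto).comp hlim
    have h2 : Tendsto (fun s => (1/2) * (deriv w s)^2) atTop (𝓝 ((1/2) * 0^2)) :=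
      ((hlim'.pow 2).const_mul (1/2))
    have h3 := h1.sub h2
    rw [hG]
    convert h3 using 2
    norm_num
  have hintG : IntegrableOn (fun s => ((n:ℝ)-1) * Real.tanh s * (deriv w s)^2) (Set.Ioi t) := by
    have := (hint t).const_mul ((n:ℝ)-1)
    simpa [mul_assoc, IntegrableOn] using this
  have key := integral_Ioi_of_hasDerivAt_of_tendsto' (fun x _ => hGd x) hintG hlimG
  have hpull : ∫ s in Set.Ioi t, ((n:ℝ)-1) * Real.tanh s * (deriv w s)^2
      = ((n:ℝ)-1) * ∫ s in Set.Ioi t, Real.tanh s * (deriv w s)^2 := by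
    rw [← integral_const_mul]
    congr 1 with s; ring
  rw [hpull] at key
  have hGt : G t = F (w t) - (1/2) * (deriv w t) ^ 2 := by rw [hG]
  rw [hGt] at key
  linarith [key]
end
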